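/- arXiv:1509.04335 — 11 statements merged into one kernel-verified Lean document; each statement's English description precedes it below -/
import Mathlib

section
/- Let X and Y be nonempty finite types. Let K₁, K₂ : Matrix X Y ℝ be row-stochastic matrices, and suppose K₂ is a degraded version of K₁, i.e., there is a row-stochastic matrix W : Matrix Y Y ℝ with K₂ = K₁ * W. Let 0 ≤ p₂ ≤ p₁ ≤ 1, and for p ∈ [0,1] define the state-augmented channel N_p : Matrix X (Y × Bool) ℝ by N_p x (y, true) = p · K₁ x y and N_p x (y, false) = (1−p) · K₂ x y. Then N_{p₂} is a degraded version of N_{p₁}: there exists a row-stochastic matrix V : Matrix (Y × Bool) (Y × Bool) ℝ with N_{p₂} = N_{p₁} * V. -/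
/-- A channel with finite input alphabet `X` and finite output alphabet `Y` is a
row-stochastic matrix: nonnegative entries with each row summing to 1. -/
def RowStochastic {X Y : Type*} [Fintype Y] (K : Matrix X Y ℝ) : Prop :=
  (∀ x y, 0 ≤ K x y) ∧ ∀ x, ∑ y, K x y = 1

/-- The state-augmented channel `N_p`: with probability `p` the state is `true` and the
output is drawn from `K₁`, with probability `1 - p` the state is `false` and the output is
drawn from `K₂`; the receiver observes the pair (output, state). -/
noncomputable def stateAug {X Y : Type*} (p : ℝ) (K₁ K₂ : Matrix X Y ℝ) :
    Matrix X (Y × Bool) ℝ :=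
  Matrix.of fun x ys => if ys.2 then p * K₁ x ys.1 else (1 - p) * K₂ x ys.1

/-- Theorem 3(i): if `K₂` is a degraded version of `K₁`, then for `0 ≤ p₂ ≤ p₁ ≤ 1` the
state-augmented channel `N_{p₂}` is a degraded version of `N_{p₁}`. -/
theorem stateAug_degraded {X Y : Type*} [Fintype X] [Fintype Y] [Nonempty X] [Nonempty Y]
    (K₁ K₂ : Matrix X Y ℝ) (hK₁ : RowStochastic K₁) (hK₂ : RowStochastic K₂)
    (W : Matrix Y Y ℝ) (hW : RowStochastic W) (hdeg : K₂ = K₁ * W)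
    (p₁ p₂ : ℝ) (hp₂ : 0 ≤ p₂) (hle : p₂ ≤ p₁) (hp₁ : p₁ ≤ 1) :
    ∃ V : Matrix (Y × Bool) (Y × Bool) ℝ, RowStochastic V ∧
      stateAug p₂ K₁ K₂ = stateAug p₁ K₁ K₂ * V := by
  classical
  set a : ℝ := if p₁ = 0 then 1 else p₂ / p₁ with ha
  have hp₁0 : 0 ≤ p₁ := le_trans hp₂ hle
  have ha0 : 0 ≤ a := by
    rw [ha]; split
    · norm_num
    · positivity
  have ha1 : a ≤ 1 := by
    rw [ha]; split
    · exact le_refl 1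
    · exact div_le_one_of_le₀ hle hp₁0
  have hpa : p₁ * a = p₂ := by
    rw [ha]; split
    · rename_i h
      have : p₂ = 0 := le_antisymm (h ▸ hle) hp₂
      simp [h, this]
    · rename_i h
      field_simp
  refine ⟨Matrix.of fun ys zs =>
    if ys.2 then
      (if zs.2 then a * (if zs.1 = ys.1 then (1:ℝ) else 0) else (1 - a) * W ys.1 zs.1)
    else
      (if zs.2 then 0 else if zs.1 = ys.1 then 1 else 0), ⟨?_, ?_⟩, ?_⟩
  · rintro ⟨y, s⟩ ⟨y', s'⟩
    simp only [Matrix.of_apply]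
    cases s <;> cases s' <;> simp only [Bool.false_eq_true, if_false, if_true]
    · split <;> norm_num
    · exact le_refl 0
    · exact mul_nonneg (by linarith) (hW.1 _ _)
    · exact mul_nonneg ha0 (by split <;> norm_num)
  · rintro ⟨y, s⟩
    rw [Fintype.sum_prod_type_right, Fintype.sum_bool]
    cases s <;>
      simp only [Matrix.of_apply, Bool.false_eq_true, if_false, if_true, mul_ite, mul_one,
        mul_zero, Finset.sum_ite_eq', Finset.mem_univ, ← Finset.mul_sum, hW.2 y,
        Finset.sum_const_zero]
    · ring
    · ring
  · ext x ⟨y', s'⟩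
    rw [Matrix.mul_apply, Fintype.sum_prod_type_right, Fintype.sum_bool]
    have hK2 : K₂ x y' = ∑ y, K₁ x y * W y y' := by rw [hdeg, Matrix.mul_apply]
    cases s' <;>
      simp only [stateAug, Matrix.of_apply, Bool.false_eq_true, if_false, if_true, mul_ite,
        mul_one, mul_zero, Finset.sum_ite_eq, Finset.mem_univ, Finset.sum_const_zero,
        add_zero, zero_add]
    · have : ∑ y, p₁ * K₁ x y * ((1 - a) * W y y')
          = p₁ * (1 - a) * ∑ y, K₁ x y * W y y' := by
        rw [Finset.mul_sum]; exact Finset.sum_congr rfl fun y _ => by ring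
      rw [this, ← hK2]
      linear_combination (K₂ x y') * hpa
    · rw [← hpa]; ring
end

section
/- Let X, Y be nonempty finite types and K₁, K₂ channels from X to Y. Suppose that for every nonempty finite type U and every joint pmf p on U × X, I(U; Y)_{r̃₁} ≥ I(U; Y)_{r̃₂}, where r̃ₖ is the joint pmf on U × Y induced by p and Kₖ (i.e., the broadcast channel with components K₁, K₂ is less noisy). Let 1 ≥ p₁ ≥ p₂ ≥ 0. Then for every nonempty finite type U and every joint pmf p on U × X, the mutual information I(U; Y × Bool) computed from the joint pmf induced by p and the state-augmented mixture channel N_{p₁} is greater than or equal to the one computed from the joint pmf induced by p and N_{p₂}. -/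
/-- A pmf on a finite type: nonnegative and summing to 1. -/
def IsPMF {A : Type*} [Fintype A] (w : A → ℝ) : Prop :=
  (∀ a, 0 ≤ w a) ∧ ∑ a, w a = 1

/-- Shannon entropy (natural logarithm) of a pmf on a finite type. -/
noncomputable def entropy {A : Type*} [Fintype A] (w : A → ℝ) : ℝ :=
  ∑ a, Real.negMulLog (w a)

/-- Mutual information of a joint pmf on a product of finite types. -/
noncomputable def mutualInfo {A B : Type*} [Fintype A] [Fintype B] (r : A × B → ℝ) : ℝ :=
  entropy (fun a => ∑ b, r (a, b)) + entropy (fun b => ∑ a, r (a, b)) - entropy r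

/-- A channel from `X` to `Y`: each row is a pmf on `Y`. -/
def IsChannel {X Y : Type*} [Fintype Y] (K : X → Y → ℝ) : Prop :=
  ∀ x, IsPMF (K x)

/-- The joint pmf on `U × Z` induced by a joint pmf on `U × X` and a channel from `X` to `Z`. -/
noncomputable def induced {U X Z : Type*} [Fintype X] (p : U × X → ℝ) (K : X → Z → ℝ) :
    U × Z → ℝ := fun uz => ∑ x, p (uz.1, x) * K x uz.2

/-- The state-augmented mixture channel `N_q`: the state selects channel `K₁` with
probability `q` and `K₂` with probability `1 - q`, independently of the input, and the
output is the pair (channel output, state). -/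
noncomputable def mixChannel {X Y : Type*} (q : ℝ) (K₁ K₂ : X → Y → ℝ) :
    X → Y × Bool → ℝ := fun x ys => if ys.2 then q * K₁ x ys.1 else (1 - q) * K₂ x ys.1

section Aux
open Real Finset

variable {U X Z : Type*} [Fintype U] [Fintype X] [Fintype Z]

set_option linter.unusedSectionVars false

lemma induced_marginal (p : U × X → ℝ) (K : X → Z → ℝ) (hK : ∀ x, ∑ z, K x z = 1) (u : U) :
    ∑ z, induced p K (u, z) = ∑ x, p (u, x) := by
  unfold induced
  dsimp only
  rw [Finset.sum_comm]
  refine Finset.sum_congr rfl fun x _ => ?_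
  rw [← Finset.mul_sum, hK x, mul_one]

lemma induced_total (p : U × X → ℝ) (K : X → Z → ℝ) (hp : IsPMF p)
    (hK : ∀ x, ∑ z, K x z = 1) :
    ∑ uz : U × Z, induced p K uz = 1 := by
  rw [Fintype.sum_prod_type]
  calc ∑ u, ∑ z, induced p K (u, z) = ∑ u, ∑ x, p (u, x) := by
        exact Finset.sum_congr rfl fun u _ => induced_marginal p K hK u
    _ = 1 := by rw [← Fintype.sum_prod_type]; exact hp.2

lemma entropy_mix {A : Type*} [Fintype A] (a b : ℝ) (f g : A → ℝ)
    (hf : ∑ x, f x = 1) (hg : ∑ x, g x = 1) :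
    ∑ x, (Real.negMulLog (a * f x) + Real.negMulLog (b * g x)) =
      a * entropy f + b * entropy g + Real.negMulLog a + Real.negMulLog b := by
  unfold entropy
  simp only [Real.negMulLog_mul, Finset.sum_add_distrib, ← Finset.sum_mul, ← Finset.mul_sum,
    hf, hg]
  ring

lemma mixChannel_rowsum {Y : Type*} [Fintype Y] (q : ℝ) (K₁ K₂ : X → Y → ℝ)
    (hK₁ : IsChannel K₁) (hK₂ : IsChannel K₂) (x : X) :
    ∑ ys : Y × Bool, mixChannel q K₁ K₂ x ys = 1 := by
  rw [Fintype.sum_prod_type]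
  have h : ∀ y : Y, (∑ s : Bool, mixChannel q K₁ K₂ x (y, s)) = q * K₁ x y + (1 - q) * K₂ x y := by
    intro y
    rw [Fintype.sum_bool]
    show (if true = true then _ else _) + (if false = true then _ else _) = _
    rw [if_pos rfl, if_neg Bool.false_ne_true]
  rw [Finset.sum_congr rfl fun y _ => h y, Finset.sum_add_distrib, ← Finset.mul_sum,
    ← Finset.mul_sum, (hK₁ x).2, (hK₂ x).2]
  ring

lemma mutualInfo_mixChannel {Y : Type*} [Fintype Y] (q : ℝ) (K₁ K₂ : X → Y → ℝ)
    (hK₁ : IsChannel K₁) (hK₂ : IsChannel K₂) (p : U × X → ℝ) (hp : IsPMF p) :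
    mutualInfo (induced p (mixChannel q K₁ K₂)) =
      q * mutualInfo (induced p K₁) + (1 - q) * mutualInfo (induced p K₂) := by
  set r₁ := induced p K₁ with hr₁
  set r₂ := induced p K₂ with hr₂
  set r := induced p (mixChannel q K₁ K₂) with hrdef
  have hK₁' : ∀ x, ∑ y, K₁ x y = 1 := fun x => (hK₁ x).2
  have hK₂' : ∀ x, ∑ y, K₂ x y = 1 := fun x => (hK₂ x).2
  have htrue : ∀ u y, r (u, (y, true)) = q * r₁ (u, y) := by
    intro u y
    show (∑ x, p (u, x) * (if true = true then q * K₁ x y else (1 - q) * K₂ x y))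
      = q * ∑ x, p (u, x) * K₁ x y
    rw [Finset.mul_sum]
    refine Finset.sum_congr rfl fun x _ => ?_
    rw [if_pos rfl]; ring
  have hfalse : ∀ u y, r (u, (y, false)) = (1 - q) * r₂ (u, y) := by
    intro u y
    show (∑ x, p (u, x) * (if false = true then q * K₁ x y else (1 - q) * K₂ x y))
      = (1 - q) * ∑ x, p (u, x) * K₂ x y
    rw [Finset.mul_sum]
    refine Finset.sum_congr rfl fun x _ => ?_
    rw [if_neg Bool.false_ne_true]; ring
  -- total sums
  have ht₁ : ∑ uy : U × Y, r₁ uy = 1 := induced_total p K₁ hp hK₁'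
  have ht₂ : ∑ uy : U × Y, r₂ uy = 1 := induced_total p K₂ hp hK₂'
  -- output marginals
  set m₁ : Y → ℝ := fun y => ∑ u, r₁ (u, y) with hm₁
  set m₂ : Y → ℝ := fun y => ∑ u, r₂ (u, y) with hm₂
  have hmt₁ : ∑ y, m₁ y = 1 := by
    rw [hm₁]; rw [Finset.sum_comm]; rw [← Fintype.sum_prod_type]; exact ht₁
  have hmt₂ : ∑ y, m₂ y = 1 := by
    rw [hm₂]; rw [Finset.sum_comm]; rw [← Fintype.sum_prod_type]; exact ht₂
  -- joint entropy
  have hHr : entropy r = q * entropy r₁ + (1 - q) * entropy r₂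
      + Real.negMulLog q + Real.negMulLog (1 - q) := by
    rw [← entropy_mix q (1 - q) r₁ r₂ ht₁ ht₂]
    unfold entropy
    rw [Fintype.sum_prod_type, Fintype.sum_prod_type]
    refine Finset.sum_congr rfl fun u _ => ?_
    rw [Fintype.sum_prod_type]
    refine Finset.sum_congr rfl fun y _ => ?_
    rw [Fintype.sum_bool, htrue, hfalse]
  -- output marginal entropy
  have hHout : entropy (fun ys : Y × Bool => ∑ u, r (u, ys)) =
      q * entropy m₁ + (1 - q) * entropy m₂
        + Real.negMulLog q + Real.negMulLog (1 - q) := by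
    rw [← entropy_mix q (1 - q) m₁ m₂ hmt₁ hmt₂]
    unfold entropy
    rw [Fintype.sum_prod_type]
    refine Finset.sum_congr rfl fun y _ => ?_
    rw [Fintype.sum_bool]
    have e1 : ∑ u, r (u, (y, true)) = q * m₁ y := by
      rw [hm₁]; dsimp only; rw [Finset.mul_sum]
      exact Finset.sum_congr rfl fun u _ => htrue u y
    have e2 : ∑ u, r (u, (y, false)) = (1 - q) * m₂ y := by
      rw [hm₂]; dsimp only; rw [Finset.mul_sum]
      exact Finset.sum_congr rfl fun u _ => hfalse u y
    dsimp only
    rw [e1, e2]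
  -- input marginals all equal pU
  have hin : (fun u => ∑ ys : Y × Bool, r (u, ys)) = fun u => ∑ x, p (u, x) := by
    funext u
    exact induced_marginal p _ (mixChannel_rowsum q K₁ K₂ hK₁ hK₂) u
  have hin₁ : (fun u => ∑ y, r₁ (u, y)) = fun u => ∑ x, p (u, x) := by
    funext u; exact induced_marginal p K₁ hK₁' u
  have hin₂ : (fun u => ∑ y, r₂ (u, y)) = fun u => ∑ x, p (u, x) := by
    funext u; exact induced_marginal p K₂ hK₂' u
  unfold mutualInfo
  rw [hin, hin₁, hin₂, hHr, hHout]
  have : (fun y => ∑ u, r₁ (u, y)) = m₁ := rfl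
  rw [this]
  have : (fun y => ∑ u, r₂ (u, y)) = m₂ := rfl
  rw [this]
  ring

end Aux

/-- Theorem 3(ii): if the broadcast channel with components `K₁, K₂` is less noisy
(receiver 1 less noisy than receiver 2), then for `1 ≥ p₁ ≥ p₂ ≥ 0` the broadcast channel
with two channel state components known at the receivers is less noisy: the receiver whose
state picks `K₁` with the larger probability `p₁` is less noisy. -/
theorem mixChannel_lessNoisy {X Y : Type*} [Fintype X] [Fintype Y] [Nonempty X] [Nonempty Y]
    (K₁ K₂ : X → Y → ℝ) (hK₁ : IsChannel K₁) (hK₂ : IsChannel K₂)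
    (hln : ∀ (U : Type) [Fintype U] [Nonempty U], ∀ p : U × X → ℝ, IsPMF p →
      mutualInfo (induced p K₂) ≤ mutualInfo (induced p K₁))
    (p₁ p₂ : ℝ) (hp₂ : 0 ≤ p₂) (hle : p₂ ≤ p₁) (hp₁ : p₁ ≤ 1) :
    ∀ (U : Type) [Fintype U] [Nonempty U], ∀ p : U × X → ℝ, IsPMF p →
      mutualInfo (induced p (mixChannel p₂ K₁ K₂)) ≤
        mutualInfo (induced p (mixChannel p₁ K₁ K₂)) := by
  intro U _ _ p hp
  rw [mutualInfo_mixChannel p₁ K₁ K₂ hK₁ hK₂ p hp,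
      mutualInfo_mixChannel p₂ K₁ K₂ hK₁ hK₂ p hp]
  have h := hln U p hp
  nlinarith [mul_nonneg (sub_nonneg.2 hle) (sub_nonneg.2 h)]
end

section
/- Let X, Y be nonempty finite types and K₁, K₂ channels from X to Y. Suppose that for every pmf π on X, I(X; Y)_{s₁} ≥ I(X; Y)_{s₂}, where sₖ is the joint pmf on X × Y given by sₖ(x,y) = π x · Kₖ x y (i.e., the broadcast channel with components K₁, K₂ is more capable). Let 1 ≥ p₁ ≥ p₂ ≥ 0. Then for every pmf π on X, the mutual information I(X; Y × Bool) computed from the joint pmf (x,(y,s)) ↦ π x · N_{p₁} x (y,s) is greater than or equal to the one computed from (x,(y,s)) ↦ π x · N_{p₂} x (y,s). -/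
private lemma nml_mul' (a b : ℝ) :
    Real.negMulLog (a * b) = b * Real.negMulLog a + a * Real.negMulLog b := by
  rcases eq_or_ne a 0 with ha | ha
  · simp [ha, Real.negMulLog]
  rcases eq_or_ne b 0 with hb | hb
  · simp [hb, Real.negMulLog]
  · simp only [Real.negMulLog, Real.log_mul ha hb]; ring

private lemma sum_nml_mix {A : Type*} [Fintype A] (q : ℝ) (f g : A → ℝ)
    (hf : ∑ a, f a = 1) (hg : ∑ a, g a = 1) :
    ∑ a, (Real.negMulLog (q * f a) + Real.negMulLog ((1 - q) * g a)) =
      q * ∑ a, Real.negMulLog (f a) + (1 - q) * ∑ a, Real.negMulLog (g a)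
        + Real.negMulLog q + Real.negMulLog (1 - q) := by
  have h : ∀ a : A, Real.negMulLog (q * f a) + Real.negMulLog ((1 - q) * g a)
      = q * Real.negMulLog (f a) + (1 - q) * Real.negMulLog (g a)
        + f a * Real.negMulLog q + g a * Real.negMulLog (1 - q) := by
    intro a; rw [nml_mul', nml_mul']; ring
  rw [Finset.sum_congr rfl (fun a _ => h a)]
  simp only [Finset.sum_add_distrib, ← Finset.sum_mul, hf, hg]
  rw [Finset.mul_sum, Finset.mul_sum]
  ring

/-- Theorem 3(iii): if the broadcast channel with components `K₁, K₂` is more capable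
(receiver 1 more capable than receiver 2), then for `1 ≥ p₁ ≥ p₂ ≥ 0` the broadcast channel
with two channel state components known at the receivers is more capable. -/
theorem mixChannel_moreCapable {X Y : Type*} [Fintype X] [Fintype Y] [Nonempty X] [Nonempty Y]
    (K₁ K₂ : X → Y → ℝ) (hK₁ : IsChannel K₁) (hK₂ : IsChannel K₂)
    (hmc : ∀ π : X → ℝ, IsPMF π →
      mutualInfo (fun xy : X × Y => π xy.1 * K₂ xy.1 xy.2) ≤
        mutualInfo (fun xy : X × Y => π xy.1 * K₁ xy.1 xy.2))
    (p₁ p₂ : ℝ) (hp₂ : 0 ≤ p₂) (hle : p₂ ≤ p₁) (hp₁ : p₁ ≤ 1) :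
    ∀ π : X → ℝ, IsPMF π →
      mutualInfo (fun xz : X × (Y × Bool) => π xz.1 * mixChannel p₂ K₁ K₂ xz.1 xz.2) ≤
        mutualInfo (fun xz : X × (Y × Bool) => π xz.1 * mixChannel p₁ K₁ K₂ xz.1 xz.2) := by
  intro π hπ
  have hπ1 : ∑ x, π x = 1 := hπ.2
  have hK₁s : ∀ x, ∑ y, K₁ x y = 1 := fun x => (hK₁ x).2
  have hK₂s : ∀ x, ∑ y, K₂ x y = 1 := fun x => (hK₂ x).2
  set m₁ : Y → ℝ := fun y => ∑ x, π x * K₁ x y with hm₁def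
  set m₂ : Y → ℝ := fun y => ∑ x, π x * K₂ x y with hm₂def
  set s₁ : X × Y → ℝ := fun xy => π xy.1 * K₁ xy.1 xy.2 with hs₁def
  set s₂ : X × Y → ℝ := fun xy => π xy.1 * K₂ xy.1 xy.2 with hs₂def
  have hm₁ : ∑ y, m₁ y = 1 := by
    rw [hm₁def]
    rw [Finset.sum_comm]
    simp only [← Finset.mul_sum]
    simp only [hK₁s, mul_one]
    exact hπ1
  have hm₂ : ∑ y, m₂ y = 1 := by
    rw [hm₂def]
    rw [Finset.sum_comm]
    simp only [← Finset.mul_sum]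
    simp only [hK₂s, mul_one]
    exact hπ1
  have hs₁sum : ∑ xy : X × Y, s₁ xy = 1 := by
    rw [hs₁def, Fintype.sum_prod_type]
    simp only [← Finset.mul_sum, hK₁s, mul_one]
    exact hπ1
  have hs₂sum : ∑ xy : X × Y, s₂ xy = 1 := by
    rw [hs₂def, Fintype.sum_prod_type]
    simp only [← Finset.mul_sum, hK₂s, mul_one]
    exact hπ1
  -- mutual information of the component joint pmfs
  have hI : ∀ (K : X → Y → ℝ), (∀ x, ∑ y, K x y = 1) →
      mutualInfo (fun xy : X × Y => π xy.1 * K xy.1 xy.2)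
        = entropy π + entropy (fun y => ∑ x, π x * K x y)
            - entropy (fun xy : X × Y => π xy.1 * K xy.1 xy.2) := by
    intro K hK
    unfold mutualInfo
    have h : (fun a : X => ∑ b : Y, (fun xy : X × Y => π xy.1 * K xy.1 xy.2) (a, b)) = π := by
      funext x
      simp only
      rw [← Finset.mul_sum, hK x, mul_one]
    rw [h]
  -- mutual information of the mixture joint pmf
  have key : ∀ q : ℝ,
      mutualInfo (fun xz : X × (Y × Bool) => π xz.1 * mixChannel q K₁ K₂ xz.1 xz.2)
        = q * mutualInfo (fun xy : X × Y => π xy.1 * K₁ xy.1 xy.2)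
          + (1 - q) * mutualInfo (fun xy : X × Y => π xy.1 * K₂ xy.1 xy.2) := by
    intro q
    have hA : (fun x : X => ∑ ys : Y × Bool, π x * mixChannel q K₁ K₂ x ys) = π := by
      funext x
      rw [Fintype.sum_prod_type]
      have : ∀ y : Y, ∑ s : Bool, π x * mixChannel q K₁ K₂ x (y, s)
          = π x * q * K₁ x y + π x * (1 - q) * K₂ x y := by
        intro y
        simp [mixChannel, Fintype.sum_bool]
        ring
      rw [Finset.sum_congr rfl (fun y _ => this y)]
      rw [Finset.sum_add_distrib, ← Finset.mul_sum, ← Finset.mul_sum, hK₁s x, hK₂s x]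
      ring
    have hB : entropy (fun ys : Y × Bool => ∑ x, π x * mixChannel q K₁ K₂ x ys)
        = q * entropy m₁ + (1 - q) * entropy m₂
          + Real.negMulLog q + Real.negMulLog (1 - q) := by
      have hfun : (fun ys : Y × Bool => ∑ x, π x * mixChannel q K₁ K₂ x ys)
          = fun ys : Y × Bool => if ys.2 then q * m₁ ys.1 else (1 - q) * m₂ ys.1 := by
        funext ys
        obtain ⟨y, s⟩ := ys
        cases s
        · simp only [mixChannel, if_false, Bool.false_eq_true]
          rw [Finset.mul_sum]
          exact Finset.sum_congr rfl (fun x _ => by ring)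
        · simp only [mixChannel, if_true]
          rw [Finset.mul_sum]
          exact Finset.sum_congr rfl (fun x _ => by ring)
      rw [hfun]
      unfold entropy
      rw [Fintype.sum_prod_type]
      have : ∀ y : Y, ∑ s : Bool,
          Real.negMulLog (if s then q * m₁ y else (1 - q) * m₂ y)
          = Real.negMulLog (q * m₁ y) + Real.negMulLog ((1 - q) * m₂ y) := by
        intro y
        rw [Fintype.sum_bool]
        simp
      rw [Finset.sum_congr rfl (fun y _ => this y)]
      exact sum_nml_mix q m₁ m₂ hm₁ hm₂
    have hR : entropy (fun xz : X × (Y × Bool) => π xz.1 * mixChannel q K₁ K₂ xz.1 xz.2)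
        = q * entropy s₁ + (1 - q) * entropy s₂
          + Real.negMulLog q + Real.negMulLog (1 - q) := by
      unfold entropy
      rw [Fintype.sum_prod_type]
      have step : ∀ x : X, ∑ ys : Y × Bool,
          Real.negMulLog (π x * mixChannel q K₁ K₂ x ys)
          = ∑ y : Y, (Real.negMulLog (q * s₁ (x, y)) + Real.negMulLog ((1 - q) * s₂ (x, y))) := by
        intro x
        rw [Fintype.sum_prod_type]
        refine Finset.sum_congr rfl (fun y _ => ?_)
        rw [Fintype.sum_bool]
        simp only [mixChannel, if_true, if_false, Bool.false_eq_true, hs₁def, hs₂def]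
        congr 1 <;> congr 1 <;> ring
      rw [Finset.sum_congr rfl (fun x _ => step x)]
      have h := sum_nml_mix q s₁ s₂ hs₁sum hs₂sum
      rw [Fintype.sum_prod_type] at h
      exact h
    rw [hI K₁ hK₁s, hI K₂ hK₂s]
    unfold mutualInfo
    rw [hA, hB, hR]
    rw [← hm₁def, ← hm₂def, ← hs₁def, ← hs₂def]
    ring
  rw [key p₁, key p₂]
  have h12 := hmc π hπ
  nlinarith [mul_nonneg (sub_nonneg.2 hle) (sub_nonneg.2 h12)]
end

section
/- Let m ≥ 1 and let Y be a nonempty finite type. Call a channel κ from Fin m to Y c-symmetric if for every j : Fin m there exists a permutation π of Y such that κ (i + j) (π y) = κ i y for all i : Fin m and y : Y (addition in Fin m, i.e., modulo m). If κ₁ and κ₂ are c-symmetric channels from Fin m to Y and q ∈ [0,1], then the state-augmented mixture channel η from Fin m to Y × Bool, defined by η i (y, true) = q · κ₁ i y and η i (y, false) = (1−q) · κ₂ i y, is c-symmetric as a channel with output alphabet Y × Bool. -/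
/-- A channel from `Fin m` to `Y` is c-symmetric if for every cyclic shift `j` of the input
there is a permutation of the output alphabet carrying the channel law at `i` to that at
`i + j` (addition modulo `m`). -/
def CSymmetric {m : ℕ} {Y : Type*} (κ : Fin m → Y → ℝ) : Prop :=
  ∀ j : Fin m, ∃ π : Equiv.Perm Y, ∀ (i : Fin m) (y : Y), κ (i + j) (π y) = κ i y

/-- Structural part of Theorem 3(iv): if both channel components are c-symmetric, then the
state-augmented mixture channel (whose output includes the state) is c-symmetric. -/
theorem mixChannel_cSymmetric {m : ℕ} (hm : 1 ≤ m) {Y : Type*} [Fintype Y] [Nonempty Y]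
    (κ₁ κ₂ : Fin m → Y → ℝ) (hκ₁ : IsChannel κ₁) (hκ₂ : IsChannel κ₂)
    (hc₁ : CSymmetric κ₁) (hc₂ : CSymmetric κ₂)
    (q : ℝ) (hq0 : 0 ≤ q) (hq1 : q ≤ 1) :
    CSymmetric (mixChannel q κ₁ κ₂) := by
  intro j
  obtain ⟨π₁, h₁⟩ := hc₁ j
  obtain ⟨π₂, h₂⟩ := hc₂ j
  refine ⟨Equiv.prodCongrLeft (fun s => if s then π₁ else π₂), ?_⟩
  rintro i ⟨y, s⟩
  cases s <;> simp [mixChannel, Equiv.prodCongrLeft, h₁, h₂]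
end

section
/- Let m ≥ 1, X = Fin m, and let u denote the uniform pmf on X. Let Y be a nonempty finite type, K₁ and K₂ channels from X to Y, and 1 ≥ p₁ ≥ p₂ ≥ 0. For a pmf π on X write Δ(π) = I(X;Y)_{s₁(π)} − I(X;Y)_{s₂(π)}, where sₖ(π)(x,y) = π x · Kₖ x y, and write Δ_S(π) = I(X; Y × Bool)_{t₁(π)} − I(X; Y × Bool)_{t₂(π)}, where tⱼ(π)(x,(y,s)) = π x · N_{p_j} x (y,s). If Δ(π) ≤ Δ(u) for every pmf π on X, then Δ_S(π) ≤ Δ_S(u) for every pmf π on X. -/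
/-- `Δ(π) = I(X;Y)_{K₁} − I(X;Y)_{K₂}` for input pmf `π`. -/
noncomputable def deltaMI {X Y : Type*} [Fintype X] [Fintype Y]
    (K₁ K₂ : X → Y → ℝ) (π : X → ℝ) : ℝ :=
  mutualInfo (fun xy : X × Y => π xy.1 * K₁ xy.1 xy.2) -
    mutualInfo (fun xy : X × Y => π xy.1 * K₂ xy.1 xy.2)

/-- `Δ_S(π) = I(X;Y,S)_{N_{p₁}} − I(X;Y,S)_{N_{p₂}}` for input pmf `π`. -/
noncomputable def deltaMIState {X Y : Type*} [Fintype X] [Fintype Y]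
    (p₁ p₂ : ℝ) (K₁ K₂ : X → Y → ℝ) (π : X → ℝ) : ℝ :=
  mutualInfo (fun xz : X × (Y × Bool) => π xz.1 * mixChannel p₁ K₁ K₂ xz.1 xz.2) -
    mutualInfo (fun xz : X × (Y × Bool) => π xz.1 * mixChannel p₂ K₁ K₂ xz.1 xz.2)

lemma sum_negMulLog_smul {A : Type*} [Fintype A] (c : ℝ) (w : A → ℝ)
    (hw : ∑ a, w a = 1) :
    ∑ a, Real.negMulLog (c * w a) = c * (∑ a, Real.negMulLog (w a)) + Real.negMulLog c := by
  have h : ∀ a, Real.negMulLog (c * w a)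
      = c * Real.negMulLog (w a) + w a * Real.negMulLog c := by
    intro a; rw [Real.negMulLog_mul]; ring
  simp_rw [h, Finset.sum_add_distrib, ← Finset.mul_sum, ← Finset.sum_mul, hw, one_mul]

lemma mutualInfo_mix {X Y : Type*} [Fintype X] [Fintype Y] (q : ℝ)
    (K₁ K₂ : X → Y → ℝ) (hK₁ : IsChannel K₁) (hK₂ : IsChannel K₂)
    (π : X → ℝ) (hπ : IsPMF π) :
    mutualInfo (fun xz : X × (Y × Bool) => π xz.1 * mixChannel q K₁ K₂ xz.1 xz.2)
      = q * mutualInfo (fun xy : X × Y => π xy.1 * K₁ xy.1 xy.2)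
        + (1 - q) * mutualInfo (fun xy : X × Y => π xy.1 * K₂ xy.1 xy.2) := by
  obtain ⟨hπ0, hπ1⟩ := hπ
  have hrow1 : ∀ x, ∑ y, K₁ x y = 1 := fun x => (hK₁ x).2
  have hrow2 : ∀ x, ∑ y, K₂ x y = 1 := fun x => (hK₂ x).2
  -- total mass of the joints r₁ r₂
  have htot1 : ∑ xy : X × Y, π xy.1 * K₁ xy.1 xy.2 = 1 := by
    rw [Fintype.sum_prod_type]
    simp_rw [← Finset.mul_sum, hrow1, mul_one, hπ1]
  have htot2 : ∑ xy : X × Y, π xy.1 * K₂ xy.1 xy.2 = 1 := by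
    rw [Fintype.sum_prod_type]
    simp_rw [← Finset.mul_sum, hrow2, mul_one, hπ1]
  -- X-marginals
  have hmX1 : ∀ x, ∑ y, π x * K₁ x y = π x := by
    intro x; rw [← Finset.mul_sum, hrow1, mul_one]
  have hmX2 : ∀ x, ∑ y, π x * K₂ x y = π x := by
    intro x; rw [← Finset.mul_sum, hrow2, mul_one]
  have hmXmix : ∀ x, ∑ z : Y × Bool, π x * mixChannel q K₁ K₂ x z = π x := by
    intro x
    rw [Fintype.sum_prod_type]
    simp only [Fintype.sum_bool, mixChannel, Bool.false_eq_true, if_true, if_false]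
    simp only [Finset.sum_add_distrib, ← Finset.mul_sum, hrow1, hrow2]
    ring
  -- joint entropy of the mixture
  have hjoint : entropy (fun xz : X × (Y × Bool) => π xz.1 * mixChannel q K₁ K₂ xz.1 xz.2)
      = q * entropy (fun xy : X × Y => π xy.1 * K₁ xy.1 xy.2) + Real.negMulLog q
        + ((1 - q) * entropy (fun xy : X × Y => π xy.1 * K₂ xy.1 xy.2)
            + Real.negMulLog (1 - q)) := by
    unfold entropy
    have e1 : ∑ xz : X × (Y × Bool), Real.negMulLog (π xz.1 * mixChannel q K₁ K₂ xz.1 xz.2)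
        = ∑ xy : X × Y, (Real.negMulLog (q * (π xy.1 * K₁ xy.1 xy.2))
            + Real.negMulLog ((1 - q) * (π xy.1 * K₂ xy.1 xy.2))) := by
      rw [Fintype.sum_prod_type, Fintype.sum_prod_type]
      congr 1; ext x
      rw [Fintype.sum_prod_type]
      congr 1; ext y
      simp only [Fintype.sum_bool, mixChannel, Bool.false_eq_true, if_true, if_false]
      congr 1 <;> congr 1 <;> ring
    rw [e1, Finset.sum_add_distrib,
      sum_negMulLog_smul q _ htot1, sum_negMulLog_smul (1 - q) _ htot2]
  -- YS-marginal entropy of the mixture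
  have hmiz : entropy (fun z : Y × Bool => ∑ x, π x * mixChannel q K₁ K₂ x z)
      = q * entropy (fun y => ∑ x, π x * K₁ x y) + Real.negMulLog q
        + ((1 - q) * entropy (fun y => ∑ x, π x * K₂ x y) + Real.negMulLog (1 - q)) := by
    have hm1 : ∑ y, ∑ x, π x * K₁ x y = 1 := by
      rw [Finset.sum_comm]; simp_rw [hmX1, hπ1]
    have hm2 : ∑ y, ∑ x, π x * K₂ x y = 1 := by
      rw [Finset.sum_comm]; simp_rw [hmX2, hπ1]
    have pull : ∀ (c : ℝ) (K : X → Y → ℝ) (y : Y),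
        ∑ x, π x * (c * K x y) = c * ∑ x, π x * K x y := by
      intro c K y
      rw [Finset.mul_sum]
      exact Finset.sum_congr rfl fun x _ => by ring
    unfold entropy
    rw [Fintype.sum_prod_type]
    simp only [Fintype.sum_bool, mixChannel, Bool.false_eq_true, if_true, if_false]
    simp_rw [pull]
    rw [Finset.sum_add_distrib]
    rw [sum_negMulLog_smul q _ hm1, sum_negMulLog_smul (1 - q) _ hm2]
  -- X-marginal entropies all equal entropy π
  have hxmix : entropy (fun x => ∑ z : Y × Bool, π x * mixChannel q K₁ K₂ x z)
      = entropy π := by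
    unfold entropy; simp_rw [hmXmix]
  have hx1 : entropy (fun x => ∑ y, π x * K₁ x y) = entropy π := by
    unfold entropy; simp_rw [hmX1]
  have hx2 : entropy (fun x => ∑ y, π x * K₂ x y) = entropy π := by
    unfold entropy; simp_rw [hmX2]
  unfold mutualInfo
  simp only at hjoint hmiz hxmix hx1 hx2 ⊢
  rw [hjoint, hmiz, hxmix, hx1, hx2]
  ring

/-- Dominance part of Theorem 3(iv): if the mutual-information difference of the channel
components is maximized at the uniform input, the same holds for the state-augmented
channels. -/
theorem mixChannel_dominance {m : ℕ} (hm : 1 ≤ m) {Y : Type*} [Fintype Y] [Nonempty Y]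
    (K₁ K₂ : Fin m → Y → ℝ) (hK₁ : IsChannel K₁) (hK₂ : IsChannel K₂)
    (p₁ p₂ : ℝ) (hp₂ : 0 ≤ p₂) (hle : p₂ ≤ p₁) (hp₁ : p₁ ≤ 1)
    (hdom : ∀ π : Fin m → ℝ, IsPMF π →
      deltaMI K₁ K₂ π ≤ deltaMI K₁ K₂ (fun _ => (m : ℝ)⁻¹)) :
    ∀ π : Fin m → ℝ, IsPMF π →
      deltaMIState p₁ p₂ K₁ K₂ π ≤ deltaMIState p₁ p₂ K₁ K₂ (fun _ => (m : ℝ)⁻¹) := by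
  have hm0 : (m : ℝ) ≠ 0 := by positivity
  have hu : IsPMF (fun _ : Fin m => (m : ℝ)⁻¹) := by
    constructor
    · intro _; positivity
    · simp [Finset.sum_const, Finset.card_univ]
      field_simp
  have key : ∀ w : Fin m → ℝ, IsPMF w →
      deltaMIState p₁ p₂ K₁ K₂ w = (p₁ - p₂) * deltaMI K₁ K₂ w := by
    intro w hw
    unfold deltaMIState deltaMI
    rw [mutualInfo_mix p₁ K₁ K₂ hK₁ hK₂ w hw, mutualInfo_mix p₂ K₁ K₂ hK₁ hK₂ w hw]
    ring
  intro π hπ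
  rw [key π hπ, key _ hu]
  exact mul_le_mul_of_nonneg_left (hdom π hπ) (by linarith)
end

section
/- Let U and X be nonempty finite types, p a joint pmf on U × X, k ≥ 1, ε : Fin k → [0,1], and w a pmf on Fin k. Define the joint pmf r on U × (Option X × Fin k) by r(u, (some x, i)) = w i · (1 − ε i) · p(u,x) and r(u, (none, i)) = w i · ε i · (∑_x p(u,x)). Then I(U; Option X × Fin k)_r = (∑_i w i · (1 − ε i)) · I(U; X)_p. -/
/-- The joint pmf of `(U, (Y, S))` for a receiver of the erasure broadcast channel with `k`
channel state components: state `i` has probability `v i`, and given state `i` the input is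
erased with probability `ε i` and otherwise passed through. -/
noncomputable def erasureJoint {U X : Type*} [Fintype X] {k : ℕ}
    (v : Fin k → ℝ) (ε : Fin k → ℝ) (p : U × X → ℝ) :
    U × (Option X × Fin k) → ℝ :=
  fun uz => match uz.2.1 with
    | some x => v uz.2.2 * (1 - ε uz.2.2) * p (uz.1, x)
    | none => v uz.2.2 * ε uz.2.2 * ∑ x, p (uz.1, x)

lemma sum_negMulLog_mul' {A : Type*} [Fintype A] (c : ℝ) (f : A → ℝ) :
    ∑ a, Real.negMulLog (c * f a)
      = (∑ a, f a) * Real.negMulLog c + c * ∑ a, Real.negMulLog (f a) := by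
  simp only [Real.negMulLog_mul, Finset.sum_add_distrib, ← Finset.sum_mul, ← Finset.mul_sum]

/-- Core identity for the erasure broadcast channel with `k` state components:
`I(U; Y, S) = (∑ i, w i (1 − ε i)) · I(U; X)`. -/
theorem mutualInfo_erasureJoint {U X : Type*} [Fintype U] [Fintype X] [Nonempty U] [Nonempty X]
    {k : ℕ} (hk : 1 ≤ k) (ε : Fin k → ℝ) (hε : ∀ i, ε i ∈ Set.Icc (0 : ℝ) 1)
    (w : Fin k → ℝ) (hw : IsPMF w)
    (p : U × X → ℝ) (hp : IsPMF p) :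
    mutualInfo (erasureJoint w ε p) = (∑ i, w i * (1 - ε i)) * mutualInfo p := by
  obtain ⟨hw0, hw1⟩ := hw
  obtain ⟨hp0, hp1⟩ := hp
  set Pu : U → ℝ := fun u => ∑ x, p (u, x) with hPudef
  set Px : X → ℝ := fun x => ∑ u, p (u, x) with hPxdef
  have hPusum : ∑ u, Pu u = 1 := by
    rw [hPudef, ← Fintype.sum_prod_type]; exact hp1
  have hPxsum : ∑ x, Px x = 1 := by
    rw [hPxdef]; rw [Finset.sum_comm]; rw [← Fintype.sum_prod_type]; exact hp1
  set C := ∑ i, w i * (1 - ε i) with hCdef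
  set D := ∑ i, w i * ε i with hDdef
  have hCD : C + D = 1 := by
    rw [hCdef, hDdef, ← Finset.sum_add_distrib,
      Finset.sum_congr rfl fun i (_ : i ∈ Finset.univ) => show w i * (1 - ε i) + w i * ε i = w i by ring,
      hw1]
  set HU := ∑ u, Real.negMulLog (Pu u) with hHU
  set HX := ∑ x, Real.negMulLog (Px x) with hHX
  set Hp := ∑ u, ∑ x, Real.negMulLog (p (u, x)) with hHp
  set A := ∑ i, Real.negMulLog (w i * (1 - ε i)) with hA
  set B := ∑ i, Real.negMulLog (w i * ε i) with hB
  -- U-marginal of r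
  have hmargU : ∀ u, (∑ z : Option X × Fin k, erasureJoint w ε p (u, z)) = Pu u := by
    intro u
    rw [Fintype.sum_prod_type, Fintype.sum_option]
    simp only [erasureJoint]
    rw [← Finset.sum_mul]
    rw [Finset.sum_comm]
    have : ∀ i ∈ (Finset.univ : Finset (Fin k)), ∑ x, w i * (1 - ε i) * p (u, x)
        = w i * (1 - ε i) * Pu u := fun i _ => by rw [← Finset.mul_sum]
    rw [Finset.sum_congr rfl this, ← Finset.sum_mul]
    rw [← hDdef, ← hCdef]
    linear_combination Pu u * hCD
  -- Z-marginal of r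
  have hmargZsome : ∀ (x : X) (i : Fin k),
      (∑ u, erasureJoint w ε p (u, (some x, i))) = w i * (1 - ε i) * Px x := by
    intro x i
    simp only [erasureJoint]
    rw [← Finset.mul_sum]
  have hmargZnone : ∀ (i : Fin k),
      (∑ u, erasureJoint w ε p (u, (none, i))) = w i * ε i := by
    intro i
    simp only [erasureJoint]
    rw [← Finset.mul_sum, hPusum, mul_one]
  -- entropy of the Z marginal
  have hHZ : entropy (fun z : Option X × Fin k => ∑ u, erasureJoint w ε p (u, z))
      = B + A + C * HX := by
    rw [entropy, Fintype.sum_prod_type, Fintype.sum_option]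
    have h1 : ∑ i, Real.negMulLog (∑ u, erasureJoint w ε p (u, (none, i))) = B := by
      rw [hB]; exact Finset.sum_congr rfl fun i _ => by rw [hmargZnone]
    have h2 : ∑ x, ∑ i, Real.negMulLog (∑ u, erasureJoint w ε p (u, (some x, i)))
        = A + C * HX := by
      have : ∀ x ∈ (Finset.univ : Finset X), ∀ i ∈ (Finset.univ : Finset (Fin k)),
          Real.negMulLog (∑ u, erasureJoint w ε p (u, (some x, i)))
          = Real.negMulLog (w i * (1 - ε i) * Px x) := fun x _ i _ => by rw [hmargZsome]
      rw [Finset.sum_congr rfl fun x hx => Finset.sum_congr rfl (this x hx)]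
      rw [Finset.sum_comm]
      have : ∀ i ∈ (Finset.univ : Finset (Fin k)),
          ∑ x, Real.negMulLog (w i * (1 - ε i) * Px x)
          = Real.negMulLog (w i * (1 - ε i)) + w i * (1 - ε i) * HX := fun i _ => by
        rw [sum_negMulLog_mul' (w i * (1 - ε i)) Px, hPxsum, one_mul, hHX]
      rw [Finset.sum_congr rfl this, Finset.sum_add_distrib, ← hA, ← Finset.sum_mul, ← hCdef]
    rw [h1, h2]; ring
  -- entropy of r
  have hHr : entropy (erasureJoint w ε p) = B + D * HU + (A + C * Hp) := by
    rw [entropy, Fintype.sum_prod_type]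
    have huz : ∀ u, ∑ z : Option X × Fin k, Real.negMulLog (erasureJoint w ε p (u, z))
        = ∑ i, Real.negMulLog (w i * ε i * Pu u)
          + ∑ x, ∑ i, Real.negMulLog (w i * (1 - ε i) * p (u, x)) := by
      intro u
      rw [Fintype.sum_prod_type, Fintype.sum_option]
      simp only [erasureJoint]
      rfl
    rw [Finset.sum_congr rfl fun u _ => huz u, Finset.sum_add_distrib]
    have h1 : ∑ u, ∑ i, Real.negMulLog (w i * ε i * Pu u) = B + D * HU := by
      rw [Finset.sum_comm]
      have : ∀ i ∈ (Finset.univ : Finset (Fin k)),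
          ∑ u, Real.negMulLog (w i * ε i * Pu u)
          = Real.negMulLog (w i * ε i) + w i * ε i * HU := fun i _ => by
        rw [sum_negMulLog_mul' (w i * ε i) Pu, hPusum, one_mul, hHU]
      rw [Finset.sum_congr rfl this, Finset.sum_add_distrib, ← hB, ← Finset.sum_mul, ← hDdef]
    have h2 : ∑ u, ∑ x, ∑ i, Real.negMulLog (w i * (1 - ε i) * p (u, x)) = A + C * Hp := by
      have swap : ∑ u, ∑ x, ∑ i, Real.negMulLog (w i * (1 - ε i) * p (u, x))
          = ∑ i, ∑ u, ∑ x, Real.negMulLog (w i * (1 - ε i) * p (u, x)) := by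
        rw [Finset.sum_congr rfl fun u (_ : u ∈ Finset.univ) =>
          Finset.sum_comm (s := (Finset.univ : Finset X)) (t := (Finset.univ : Finset (Fin k)))
            (f := fun x i => Real.negMulLog (w i * (1 - ε i) * p (u, x)))]
        exact Finset.sum_comm
      rw [swap]
      have : ∀ i ∈ (Finset.univ : Finset (Fin k)),
          ∑ u, ∑ x, Real.negMulLog (w i * (1 - ε i) * p (u, x))
          = Real.negMulLog (w i * (1 - ε i)) + w i * (1 - ε i) * Hp := by
        intro i _
        have hp1' : ∑ u, ∑ x, p (u, x) = 1 := by rw [← Fintype.sum_prod_type]; exact hp1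
        have key := sum_negMulLog_mul' (A := U × X) (w i * (1 - ε i)) p
        rw [Fintype.sum_prod_type, Fintype.sum_prod_type (f := p),
          Fintype.sum_prod_type (f := fun a => Real.negMulLog (p a))] at key
        rw [key, hp1', one_mul, ← hHp]
      rw [Finset.sum_congr rfl this, Finset.sum_add_distrib, ← hA, ← Finset.sum_mul, ← hCdef]
    rw [h1, h2]
  -- assemble
  have hHrU : entropy (fun u => ∑ z : Option X × Fin k, erasureJoint w ε p (u, z)) = HU := by
    rw [entropy, hHU]
    exact Finset.sum_congr rfl fun u _ => by rw [hmargU]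
  have hmip : mutualInfo p = HU + HX - Hp := by
    rw [mutualInfo, entropy, entropy, entropy, ← hHU, ← hHX, Fintype.sum_prod_type, ← hHp]
  rw [mutualInfo, hHrU, hHZ, hHr, hmip]
  linear_combination (-HU) * hCD
end

section
/- Let U and X be nonempty finite types, k ≥ 1, ε : Fin k → [0,1], and let w and w' be pmfs on Fin k with ∑_i w i · (1 − ε i) ≥ ∑_i w' i · (1 − ε i). For a pmf v on Fin k and a joint pmf p on U × X, let r_v be the joint pmf on U × (Option X × Fin k) defined by r_v(u, (some x, i)) = v i · (1 − ε i) · p(u,x) and r_v(u, (none, i)) = v i · ε i · (∑_x p(u,x)). Then for every joint pmf p on U × X, I(U; Option X × Fin k)_{r_w} ≥ I(U; Option X × Fin k)_{r_{w'}}. -/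
open Real Finset

lemma sum_negMulLog_const_mul {k : ℕ} (c : Fin k → ℝ) (t : ℝ) :
    ∑ i, negMulLog (c i * t) =
      t * (∑ i, negMulLog (c i)) + (∑ i, c i) * negMulLog t := by
  simp_rw [negMulLog_mul, Finset.sum_add_distrib, Finset.mul_sum, Finset.sum_mul]

lemma erasure_mi_eq {U X : Type*} [Fintype U] [Fintype X] {k : ℕ}
    (v ε : Fin k → ℝ) (hv1 : ∑ i, v i = 1) (p : U × X → ℝ) (hp1 : ∑ up, p up = 1) :
    mutualInfo (erasureJoint v ε p) = (∑ i, v i * (1 - ε i)) * mutualInfo p := by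
  set c : Fin k → ℝ := fun i => v i * (1 - ε i) with hc
  set d : Fin k → ℝ := fun i => v i * ε i with hd
  have hcd : (∑ i, c i) + (∑ i, d i) = 1 := by
    rw [← Finset.sum_add_distrib]; simpa [hc, hd, mul_comm, mul_add, mul_sub] using hv1
  set pU : U → ℝ := fun u => ∑ x, p (u, x) with hpU
  set pX : X → ℝ := fun x => ∑ u, p (u, x) with hpX
  have hpU1 : ∑ u, pU u = 1 := by rw [← hp1, Fintype.sum_prod_type]
  have hpX1 : ∑ x, pX x = 1 := by
    rw [← hp1, Fintype.sum_prod_type, Finset.sum_comm]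
  -- U marginal of the joint
  have hmargU : ∀ u, (∑ z : Option X × Fin k, erasureJoint v ε p (u, z)) = pU u := by
    intro u
    rw [Fintype.sum_prod_type, Fintype.sum_option]
    have : ∀ y : Option X, ∀ i : Fin k, erasureJoint v ε p (u, (y, i)) =
        match y with
        | some x => c i * p (u, x)
        | none => d i * pU u := by
      intro y i; cases y <;> simp [erasureJoint, hc, hd, hpU]
    simp only [this]
    simp_rw [← Finset.sum_mul, ← Finset.mul_sum]
    rw [show (∑ i : X, p (u, i)) = pU u from rfl]
    linear_combination (pU u) * hcd
  -- Z marginal of the joint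
  have hmargZ : ∀ z : Option X × Fin k, (∑ u, erasureJoint v ε p (u, z)) =
      match z.1 with
      | some x => c z.2 * pX x
      | none => d z.2 := by
    rintro ⟨y, i⟩
    have h1 : ∑ u : U, ∑ x, p (u, x) = 1 := hpU1
    cases y with
    | none =>
      show (∑ u : U, v i * ε i * ∑ x, p (u, x)) = d i
      rw [← Finset.mul_sum, h1, mul_one]
    | some x =>
      show (∑ u : U, v i * (1 - ε i) * p (u, x)) = c i * pX x
      rw [← Finset.mul_sum]
  -- entropy of U marginal
  have eHU : entropy (fun u => ∑ z : Option X × Fin k, erasureJoint v ε p (u, z)) =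
      entropy pU := by
    unfold entropy
    simp only [hmargU]
  have hmargZ1 : ∀ (x : X) (i : Fin k),
      (∑ u, erasureJoint v ε p (u, (some x, i))) = c i * pX x :=
    fun x i => hmargZ (some x, i)
  have hmargZ0 : ∀ i : Fin k, (∑ u, erasureJoint v ε p (u, (none, i))) = d i :=
    fun i => hmargZ (none, i)
  have hpX1' : ∑ x : X, pX x = 1 := hpX1
  -- entropy of Z marginal
  have eHZ : entropy (fun z : Option X × Fin k => ∑ u, erasureJoint v ε p (u, z)) =
      (∑ i, negMulLog (d i)) + ((∑ i, negMulLog (c i)) + (∑ i, c i) * entropy pX) := by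
    unfold entropy
    rw [Fintype.sum_prod_type, Fintype.sum_option]
    simp only [hmargZ0, hmargZ1]
    congr 1
    simp_rw [sum_negMulLog_const_mul]
    rw [Finset.sum_add_distrib, ← Finset.sum_mul, hpX1', one_mul, ← Finset.mul_sum]
  -- entropy of the joint
  set S0 : ℝ := ∑ i, negMulLog (d i) with hS0
  set S1 : ℝ := ∑ i, negMulLog (c i) with hS1
  have eHr : entropy (erasureJoint v ε p) =
      (S0 + (∑ i, d i) * entropy pU) + (S1 + (∑ i, c i) * entropy p) := by
    unfold entropy
    rw [Fintype.sum_prod_type]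
    have hterm : ∀ u : U, (∑ z : Option X × Fin k, negMulLog (erasureJoint v ε p (u, z))) =
        (pU u * S0 + (∑ i, d i) * negMulLog (pU u)) +
        ∑ x, (p (u, x) * S1 + (∑ i, c i) * negMulLog (p (u, x))) := by
      intro u
      rw [Fintype.sum_prod_type, Fintype.sum_option]
      have h0 : ∀ i : Fin k, erasureJoint v ε p (u, (none, i)) = d i * pU u := fun i => rfl
      have h1 : ∀ (x : X) (i : Fin k), erasureJoint v ε p (u, (some x, i)) = c i * p (u, x) :=
        fun x i => rfl
      simp only [h0, h1]
      simp_rw [sum_negMulLog_const_mul]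
      rfl
    simp only [hterm]
    rw [Finset.sum_add_distrib, Finset.sum_add_distrib, ← Finset.sum_mul, hpU1, one_mul,
      ← Finset.mul_sum]
    have e12 : ∑ u : U, ∑ x : X, (p (u, x) * S1 + (∑ i, c i) * negMulLog (p (u, x))) =
        S1 + (∑ i, c i) * entropy p := by
      simp_rw [Finset.sum_add_distrib, ← Finset.sum_mul, ← Finset.mul_sum]
      have a1 : (∑ u : U, ∑ x : X, p (u, x)) = 1 := by
        rw [← Fintype.sum_prod_type]; exact hp1
      have a2 : (∑ u : U, ∑ x : X, negMulLog (p (u, x))) = entropy p := by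
        rw [entropy, Fintype.sum_prod_type]
      rw [a1, a2, one_mul]
    rw [e12]
    rfl
  -- assemble
  unfold mutualInfo
  rw [eHU, eHZ, eHr]
  rw [show entropy (fun a => ∑ b, p (a, b)) = entropy pU from rfl,
    show entropy (fun b => ∑ a, p (a, b)) = entropy pX from rfl]
  linear_combination (- entropy pU) * hcd

lemma mi_nonneg {U X : Type*} [Fintype U] [Fintype X] (p : U × X → ℝ) (hp : IsPMF p) :
    0 ≤ mutualInfo p := by
  obtain ⟨hp0, hp1⟩ := hp
  set pU : U → ℝ := fun u => ∑ x, p (u, x) with hpU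
  set pX : X → ℝ := fun x => ∑ u, p (u, x) with hpX
  have hpU1 : ∑ u, pU u = 1 := by rw [← hp1, Fintype.sum_prod_type]
  have hpX1 : ∑ x, pX x = 1 := by rw [← hp1, Fintype.sum_prod_type, Finset.sum_comm]
  have hle1 : ∀ u x, p (u, x) ≤ pU u := fun u x =>
    Finset.single_le_sum (fun x _ => hp0 (u, x)) (Finset.mem_univ x)
  have hle2 : ∀ u x, p (u, x) ≤ pX x := fun u x =>
    Finset.single_le_sum (fun u _ => hp0 (u, x)) (Finset.mem_univ u)
  have key : ∀ (u : U) (x : X), p (u, x) - pU u * pX x ≤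
      p (u, x) * Real.log (p (u, x)) - p (u, x) * Real.log (pU u)
        - p (u, x) * Real.log (pX x) := by
    intro u x
    rcases eq_or_lt_of_le (hp0 (u, x)) with h | h
    · have h1 : (0:ℝ) ≤ pU u := le_trans (hp0 (u,x)) (hle1 u x)
      have h2 : (0:ℝ) ≤ pX x := le_trans (hp0 (u,x)) (hle2 u x)
      rw [← h]
      simp
      positivity
    · have h1 : (0:ℝ) < pU u := lt_of_lt_of_le h (hle1 u x)
      have h2 : (0:ℝ) < pX x := lt_of_lt_of_le h (hle2 u x)
      set a := p (u, x)
      set b := pU u * pX x with hb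
      have hbpos : 0 < b := mul_pos h1 h2
      have hlog : Real.log (b / a) ≤ b / a - 1 := Real.log_le_sub_one_of_pos (by positivity)
      have hlog2 : Real.log (b / a) = Real.log b - Real.log a := Real.log_div hbpos.ne' h.ne'
      have hlogb : Real.log b = Real.log (pU u) + Real.log (pX x) :=
        Real.log_mul h1.ne' h2.ne'
      have hmul : a * Real.log (b / a) ≤ a * (b / a - 1) :=
        mul_le_mul_of_nonneg_left hlog h.le
      have : a * (b / a - 1) = b - a := by field_simp
      rw [this, hlog2, hlogb] at hmul
      nlinarith [hmul]
  have hsum0 : ∑ u, ∑ x, (p (u, x) - pU u * pX x) = 0 := by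
    simp_rw [Finset.sum_sub_distrib, ← Finset.mul_sum]
    rw [← Finset.sum_mul]
    have h3 : (∑ u : U, ∑ x : X, p (u, x)) = 1 := by rw [← Fintype.sum_prod_type]; exact hp1
    rw [h3]
    linarith [hpX1]
  have hrw : mutualInfo p = ∑ u, ∑ x, (p (u, x) * Real.log (p (u, x))
      - p (u, x) * Real.log (pU u) - p (u, x) * Real.log (pX x)) := by
    rw [show mutualInfo p = entropy pU + entropy pX - entropy p from rfl]
    have e0 : entropy p = ∑ u, ∑ x, -(p (u, x) * Real.log (p (u, x))) := by
      rw [entropy, Fintype.sum_prod_type]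
      simp [Real.negMulLog, neg_mul]
    have e1 : entropy pU = ∑ u, ∑ x, -(p (u, x) * Real.log (pU u)) := by
      rw [entropy]
      refine Finset.sum_congr rfl fun u _ => ?_
      rw [Real.negMulLog, neg_mul, Finset.sum_neg_distrib, ← Finset.sum_mul]
    have e2 : entropy pX = ∑ u, ∑ x, -(p (u, x) * Real.log (pX x)) := by
      rw [entropy, Finset.sum_comm]
      refine Finset.sum_congr rfl fun x _ => ?_
      rw [Real.negMulLog, neg_mul, Finset.sum_neg_distrib, ← Finset.sum_mul]
    rw [e0, e1, e2, ← Finset.sum_add_distrib, ← Finset.sum_sub_distrib]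
    refine Finset.sum_congr rfl fun u _ => ?_
    rw [← Finset.sum_add_distrib, ← Finset.sum_sub_distrib]
    refine Finset.sum_congr rfl fun x _ => ?_
    ring
  rw [hrw, ← hsum0]
  exact Finset.sum_le_sum fun u _ => Finset.sum_le_sum fun x _ => key u x

/-- The erasure broadcast channel with `k` state components, with state known at the
receivers, is always less noisy: the receiver with the larger mixture capacity
`∑ i, w i (1 − ε i)` is less noisy than the other. -/
theorem erasure_lessNoisy {U X : Type*} [Fintype U] [Fintype X] [Nonempty U] [Nonempty X]
    {k : ℕ} (hk : 1 ≤ k) (ε : Fin k → ℝ) (hε : ∀ i, ε i ∈ Set.Icc (0 : ℝ) 1)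
    (w w' : Fin k → ℝ) (hw : IsPMF w) (hw' : IsPMF w')
    (hcap : ∑ i, w' i * (1 - ε i) ≤ ∑ i, w i * (1 - ε i)) :
    ∀ p : U × X → ℝ, IsPMF p →
      mutualInfo (erasureJoint w' ε p) ≤ mutualInfo (erasureJoint w ε p) := by
  intro p hp
  rw [erasure_mi_eq w ε hw.2 p hp.2, erasure_mi_eq w' ε hw'.2 p hp.2]
  exact mul_le_mul_of_nonneg_right hcap (mi_nonneg p hp)
end

section
/- Let α : Fin 3 → [0,1] and p, q : Fin 3 → ℝ with p i ≥ 0, q i ≥ 0 for all i and ∑_i p i = ∑_i q i = 1. Define D : ℝ → ℝ by D(x) = ∑_i (p i − q i) · (binEntropy(x ⋆ α i) − binEntropy(α i)). If D(1/2) ≥ 0, then either D(x) ≥ 0 for all x ∈ [0,1], or D(x) ≤ D(1/2) for all x ∈ [0,1]. -/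
/-- Binary convolution: `x ⋆ a = x(1−a) + a(1−x)`. -/
noncomputable def bconv (x a : ℝ) : ℝ := x * (1 - a) + a * (1 - x)

namespace BSC3
open Real Set

noncomputable def Lm (m : ℝ) : ℝ := Real.log (1 - m) - Real.log m
noncomputable def uu (m : ℝ) : ℝ := (1 - 2*m) * Lm m
noncomputable def ww (m : ℝ) : ℝ := (1 - 2*m)^2 / (m * (1 - m))
noncomputable def rr (m : ℝ) : ℝ :=
  (1 - 2*m) / ((m * (1 - m)) * (2 * Lm m * (m * (1 - m)) + (1 - 2*m)))
noncomputable def uD (m : ℝ) : ℝ := -((2 * Lm m * (m * (1 - m)) + (1 - 2*m)) / (m * (1 - m)))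
noncomputable def wD (m : ℝ) : ℝ := -(1 - 2*m) / (m * (1 - m))^2

lemma Lm_half : Lm (1/2) = 0 := by norm_num [Lm]

lemma Lm_pos {m : ℝ} (h0 : 0 < m) (h1 : m < 1/2) : 0 < Lm m :=
  sub_pos.2 (Real.log_lt_log h0 (by linarith))

lemma Lm_nonneg {m : ℝ} (h0 : 0 < m) (h1 : m ≤ 1/2) : 0 ≤ Lm m :=
  sub_nonneg.2 (Real.log_le_log h0 (by linarith))

lemma Lm_anti {m m' : ℝ} (h0 : 0 < m) (hmm : m < m') (h1 : m' < 1) : Lm m' < Lm m :=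
  sub_lt_sub (Real.log_lt_log (by linarith) (by linarith)) (Real.log_lt_log h0 hmm)

lemma Lm_anti_le {m m' : ℝ} (h0 : 0 < m) (hmm : m ≤ m') (h1 : m' < 1) : Lm m' ≤ Lm m :=
  sub_le_sub (Real.log_le_log (by linarith) (by linarith)) (Real.log_le_log h0 hmm)

lemma hasDerivAt_Lm {m : ℝ} (h0 : 0 < m) (h1 : m < 1) :
    HasDerivAt Lm (-(1/(1-m)) - 1/m) m := by
  have h1m : HasDerivAt (fun y : ℝ => 1 - y) (-1) m := by
    simpa using (hasDerivAt_id m).const_sub 1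
  have hlog1 : HasDerivAt (fun y : ℝ => Real.log (1 - y)) (-(1/(1-m))) m := by
    have := (Real.hasDerivAt_log (by linarith : (1:ℝ) - m ≠ 0)).comp m h1m
    exact this.congr_deriv (by ring)
  have hlog2 : HasDerivAt Real.log (1/m) m := by
    simpa [one_div] using Real.hasDerivAt_log (ne_of_gt h0)
  exact hlog1.sub hlog2

lemma Lm_ge {m : ℝ} (h0 : 0 < m) (h1 : m ≤ 1/2) : 2*(1 - 2*m) ≤ Lm m := by
  have key : AntitoneOn (fun y => Lm y + 4*y) (Ioc 0 (1/2 : ℝ)) := by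
    apply antitoneOn_of_deriv_nonpos (convex_Ioc _ _)
    · apply ContinuousOn.add _ (by fun_prop)
      intro y hy
      exact ((hasDerivAt_Lm hy.1 (by rcases hy with ⟨a,b⟩; linarith)).continuousAt).continuousWithinAt
    · rw [interior_Ioc]
      intro y hy
      exact ((hasDerivAt_Lm hy.1 (by rcases hy with ⟨a,b⟩; linarith)).add
        ((hasDerivAt_id y).const_mul 4)).differentiableAt.differentiableWithinAt
    · rw [interior_Ioc]
      intro y hy
      obtain ⟨hy0, hy1⟩ := hy
      have hD : HasDerivAt (fun y => Lm y + 4*y) (-(1/(1-y)) - 1/y + 4) y := by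
        have := (hasDerivAt_Lm hy0 (by linarith)).add ((hasDerivAt_id y).const_mul 4)
        exact this.congr_deriv (by ring)
      rw [hD.deriv]
      have hy1' : 0 < 1 - y := by linarith
      have : (4 : ℝ) ≤ 1/(1-y) + 1/y := by
        rw [div_add_div _ _ (ne_of_gt hy1') (ne_of_gt hy0), one_mul, mul_one]
        rw [le_div_iff₀ (by positivity)]
        nlinarith
      linarith
  have h2 := key (show m ∈ Ioc 0 (1/2:ℝ) from ⟨h0, h1⟩)
    (show (1/2:ℝ) ∈ Ioc 0 (1/2:ℝ) by norm_num) h1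
  simp only [Lm_half] at h2
  linarith

lemma Q_pos {m : ℝ} (h0 : 0 < m) (h1 : m < 1/2) :
    0 < (m * (1 - m)) * (2 * Lm m * (m * (1 - m)) + (1 - 2*m)) := by
  have hP : 0 < m * (1 - m) := by nlinarith
  have hL := Lm_pos h0 h1
  have : 0 < 2 * Lm m * (m * (1 - m)) + (1 - 2*m) := by nlinarith
  positivity

lemma hasDerivAt_uu {m : ℝ} (h0 : 0 < m) (h1 : m < 1) :
    HasDerivAt uu (uD m) m := by
  have hP : m * (1 - m) ≠ 0 := by
    have : 0 < m * (1-m) := by nlinarith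
    exact ne_of_gt this
  have h2 : HasDerivAt (fun y : ℝ => 1 - 2*y) (-2) m := by
    exact ((hasDerivAt_const m (1:ℝ)).sub ((hasDerivAt_id m).const_mul 2)).congr_deriv (by ring)
  have := h2.mul (hasDerivAt_Lm h0 h1)
  have hm0 : m ≠ 0 := ne_of_gt h0
  have hm1' : (1:ℝ) - m ≠ 0 := by linarith
  refine this.congr_deriv (Eq.symm ?_)
  unfold uD Lm
  field_simp
  ring

lemma hasDerivAt_ww {m : ℝ} (h0 : 0 < m) (h1 : m < 1) :
    HasDerivAt ww (wD m) m := by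
  have hP : m * (1 - m) ≠ 0 := by
    have : 0 < m * (1-m) := by nlinarith
    exact ne_of_gt this
  have h2 : HasDerivAt (fun y : ℝ => (1 - 2*y)^2) (2*(1-2*m)*(-2)) m := by
    have hb : HasDerivAt (fun y : ℝ => 1 - 2*y) (-2) m := by
      exact ((hasDerivAt_const m (1:ℝ)).sub ((hasDerivAt_id m).const_mul 2)).congr_deriv (by ring)
    exact (hb.pow 2).congr_deriv (by norm_num)
  have h3 : HasDerivAt (fun y : ℝ => y * (1 - y)) (1 - 2*m) m := by
    have := (hasDerivAt_id m).mul ((hasDerivAt_id m).const_sub 1)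
    exact this.congr_deriv (by simp only [id_eq]; ring)
  have := h2.div h3 hP
  have hm0 : m ≠ 0 := ne_of_gt h0
  have hm1' : (1:ℝ) - m ≠ 0 := by linarith
  refine this.congr_deriv (Eq.symm ?_)
  unfold wD
  field_simp
  ring

lemma hasDerivAt_rr {m : ℝ} (h0 : 0 < m) (h1 : m < 1/2) :
    HasDerivAt rr
      (-(4 * Lm m * (m*(1-m)) * (1 - 3*(m*(1-m))) + (1-2*m) * (1 - 6*(m*(1-m))))
        / ((m * (1 - m)) * (2 * Lm m * (m * (1 - m)) + (1 - 2*m)))^2) m := by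
  have hQ := Q_pos h0 h1
  have hm1 : m < 1 := by linarith
  have hP : m * (1 - m) ≠ 0 := by
    have : 0 < m * (1-m) := by nlinarith
    exact ne_of_gt this
  have hnum : HasDerivAt (fun y : ℝ => 1 - 2*y) (-2) m := by
    exact ((hasDerivAt_const m (1:ℝ)).sub ((hasDerivAt_id m).const_mul 2)).congr_deriv (by ring)
  have hPd : HasDerivAt (fun y : ℝ => y * (1 - y)) (1 - 2*m) m := by
    have := (hasDerivAt_id m).mul ((hasDerivAt_id m).const_sub 1)
    exact this.congr_deriv (by simp only [id_eq]; ring)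
  have hLd := hasDerivAt_Lm h0 hm1
  have hiQ : HasDerivAt (fun y : ℝ => (y * (1 - y)) * (2 * Lm y * (y * (1 - y)) + (1 - 2*y)))
      ((1-2*m) * (2 * Lm m * (m * (1 - m)) + (1 - 2*m))
        + (m*(1-m)) * ((2 * (-(1/(1-m)) - 1/m)) * (m*(1-m)) + 2 * Lm m * (1-2*m) + (-2))) m := by
    have hin : HasDerivAt (fun y : ℝ => 2 * Lm y * (y * (1 - y)) + (1 - 2*y))
        ((2 * (-(1/(1-m)) - 1/m)) * (m*(1-m)) + 2 * Lm m * (1-2*m) + (-2)) m := by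
      have haux : HasDerivAt (fun y : ℝ => 2 * Lm y) (2 * (-(1/(1-m)) - 1/m)) m := by
        simpa [mul_comm] using hLd.const_mul 2
      exact (haux.mul hPd).add hnum
    exact hPd.mul hin
  have hm0 : m ≠ 0 := ne_of_gt h0
  have hm1' : (1:ℝ) - m ≠ 0 := by linarith
  have := hnum.div hiQ (ne_of_gt hQ)
  refine this.congr_deriv (Eq.symm ?_)
  rw [div_eq_div_iff (by positivity) (by positivity)]
  field_simp
  ring

lemma rr_antitoneOn : AntitoneOn rr (Ioo 0 (1/2 : ℝ)) := by
  apply antitoneOn_of_deriv_nonpos (convex_Ioo _ _)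
  · intro y hy
    exact ((hasDerivAt_rr hy.1 hy.2).continuousAt).continuousWithinAt
  · rw [interior_Ioo]
    intro y hy
    exact (hasDerivAt_rr hy.1 hy.2).differentiableAt.differentiableWithinAt
  · rw [interior_Ioo]
    intro y hy
    obtain ⟨hy0, hy1⟩ := hy
    rw [(hasDerivAt_rr hy0 hy1).deriv]
    apply div_nonpos_of_nonpos_of_nonneg _ (sq_nonneg _)
    have hP0 : 0 < y * (1 - y) := by nlinarith
    have hLge : 2*(1-2*y) ≤ Lm y := Lm_ge hy0 (le_of_lt hy1)
    have hs : 0 < 1 - 2*y := by linarith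
    have hfac : (0:ℝ) ≤ 4 * (y*(1-y)) * (1 - 3*(y*(1-y))) := by nlinarith [sq_nonneg (1-2*y)]
    have h1 := mul_le_mul_of_nonneg_left hLge hfac
    have h2 : (0:ℝ) ≤ (1-2*y) * ((1-2*y)^2 * (1 + 6*(y*(1-y)))) := by positivity
    nlinarith [h1, h2]

lemma uu_strictAntiOn : StrictAntiOn uu (Ioc 0 (1/2 : ℝ)) := by
  apply strictAntiOn_of_deriv_neg (convex_Ioc _ _)
  · intro y hy
    have : y < 1 := by rcases hy with ⟨a,b⟩; linarith
    exact ((hasDerivAt_uu hy.1 this).continuousAt).continuousWithinAt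
  · rw [interior_Ioc]
    intro y hy
    obtain ⟨hy0, hy1⟩ := hy
    rw [(hasDerivAt_uu hy0 (by linarith)).deriv]
    unfold uD
    have hL := Lm_pos hy0 hy1
    have hP : 0 < y * (1 - y) := by nlinarith
    have h2 : 0 < 2 * Lm y * (y * (1 - y)) + (1 - 2*y) := by nlinarith
    exact neg_lt_zero.2 (div_pos h2 hP)

lemma continuousOn_uu : ContinuousOn uu (Ioo 0 (1 : ℝ)) := by
  intro y hy
  exact ((hasDerivAt_uu hy.1 hy.2).continuousAt).continuousWithinAt

lemma continuousOn_ww : ContinuousOn ww (Ioo 0 (1 : ℝ)) := by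
  intro y hy
  exact ((hasDerivAt_ww hy.1 hy.2).continuousAt).continuousWithinAt

lemma uD_neg {m : ℝ} (h0 : 0 < m) (h1 : m < 1/2) : uD m < 0 := by
  unfold uD
  have hL := Lm_pos h0 h1
  have hP : 0 < m * (1 - m) := by nlinarith
  have h2 : 0 < 2 * Lm m * (m * (1 - m)) + (1 - 2*m) := by nlinarith
  exact neg_lt_zero.2 (div_pos h2 hP)

lemma rr_eq {m : ℝ} (h0 : 0 < m) (h1 : m < 1/2) : wD m / uD m = rr m := by
  have hP : 0 < m * (1 - m) := by nlinarith
  have hL := Lm_pos h0 h1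
  have hQ : 0 < 2 * Lm m * (m * (1 - m)) + (1 - 2*m) := by nlinarith
  unfold wD uD rr
  rw [div_eq_div_iff (by exact ne_of_lt (by exact neg_lt_zero.2 (div_pos hQ hP))) (by positivity)]
  field_simp

lemma slope_lemma {m1 m2 m3 : ℝ} (h0 : 0 < m1) (h12 : m1 < m2) (h23 : m2 < m3)
    (h3 : m3 ≤ 1/2) :
    (ww m2 - ww m3) * (uu m1 - uu m2) ≤ (ww m1 - ww m2) * (uu m2 - uu m3) := by
  have hsub1 : Icc m1 m2 ⊆ Ioo 0 1 := fun z hz =>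
    ⟨lt_of_lt_of_le h0 hz.1, by have h := hz.2; linarith⟩
  have hsub2 : Icc m2 m3 ⊆ Ioo 0 1 := fun z hz =>
    ⟨by have h := hz.1; linarith, by have h := hz.2; linarith⟩
  obtain ⟨c1, hc1, e1⟩ := exists_ratio_hasDerivAt_eq_ratio_slope uu uD h12
    (continuousOn_uu.mono hsub1)
    (fun x hx => hasDerivAt_uu (by have := hsub1 (Ioo_subset_Icc_self hx); exact this.1)
      (by have := hsub1 (Ioo_subset_Icc_self hx); exact this.2))
    ww wD (continuousOn_ww.mono hsub1)
    (fun x hx => hasDerivAt_ww (by have := hsub1 (Ioo_subset_Icc_self hx); exact this.1)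
      (by have := hsub1 (Ioo_subset_Icc_self hx); exact this.2))
  obtain ⟨c2, hc2, e2⟩ := exists_ratio_hasDerivAt_eq_ratio_slope uu uD h23
    (continuousOn_uu.mono hsub2)
    (fun x hx => hasDerivAt_uu (by have := hsub2 (Ioo_subset_Icc_self hx); exact this.1)
      (by have := hsub2 (Ioo_subset_Icc_self hx); exact this.2))
    ww wD (continuousOn_ww.mono hsub2)
    (fun x hx => hasDerivAt_ww (by have := hsub2 (Ioo_subset_Icc_self hx); exact this.1)
      (by have := hsub2 (Ioo_subset_Icc_self hx); exact this.2))
  have hc1' : c1 ∈ Ioo 0 (1/2 : ℝ) := ⟨h0.trans hc1.1, by have := hc1.2; linarith⟩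
  have hc2' : c2 ∈ Ioo 0 (1/2 : ℝ) := ⟨by have := hc2.1; linarith, lt_of_lt_of_le hc2.2 h3⟩
  have hu1 : uD c1 < 0 := uD_neg hc1'.1 hc1'.2
  have hu2 : uD c2 < 0 := uD_neg hc2'.1 hc2'.2
  have e1' : ww m1 - ww m2 = (uu m1 - uu m2) * rr c1 := by
    rw [← rr_eq hc1'.1 hc1'.2, ← mul_div_assoc, eq_div_iff hu1.ne]
    linear_combination -e1
  have e2' : ww m2 - ww m3 = (uu m2 - uu m3) * rr c2 := by
    rw [← rr_eq hc2'.1 hc2'.2, ← mul_div_assoc, eq_div_iff hu2.ne]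
    linear_combination -e2
  have hA : 0 < uu m1 - uu m2 := sub_pos.2 (uu_strictAntiOn ⟨h0, by linarith⟩
    ⟨h0.trans h12, by linarith⟩ h12)
  have hB : 0 < uu m2 - uu m3 := sub_pos.2 (uu_strictAntiOn ⟨h0.trans h12, by linarith⟩
    ⟨by linarith, h3⟩ h23)
  have hr : rr c2 ≤ rr c1 := rr_antitoneOn hc1' hc2' (by linarith [hc1.2, hc2.1])
  rw [e1', e2']
  nlinarith [mul_le_mul_of_nonneg_left hr (mul_nonneg hA.le hB.le)]


noncomputable def psi (t x : ℝ) : ℝ := (1 - 2*t) * Lm (bconv x t)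
noncomputable def phi (t x : ℝ) : ℝ := (1 - 2*t)^2 / (bconv x t * (1 - bconv x t))
noncomputable def gg (t x : ℝ) : ℝ := Real.binEntropy (bconv x t) - Real.binEntropy t

lemma bconv_zero (t : ℝ) : bconv 0 t = t := by unfold bconv; ring

lemma one_sub_two_bconv (x t : ℝ) : 1 - 2 * bconv x t = (1-2*x)*(1-2*t) := by
  unfold bconv; ring

lemma gg_zero (t : ℝ) : gg t 0 = 0 := by unfold gg; rw [bconv_zero]; ring

lemma bconv_pos {t x : ℝ} (ht : 0 ≤ t) (ht' : t ≤ 1/2) (hx : 0 < x) (hx' : x ≤ 1/2) :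
    0 < bconv x t := by unfold bconv; nlinarith

lemma bconv_le_half {t x : ℝ} (ht' : t ≤ 1/2) (hx' : x ≤ 1/2) : bconv x t ≤ 1/2 := by
  unfold bconv; nlinarith

lemma bconv_lt_half {t x : ℝ} (ht' : t < 1/2) (hx' : x < 1/2) : bconv x t < 1/2 := by
  unfold bconv; nlinarith

lemma bconv_mono {a b x : ℝ} (hab : a ≤ b) (hx : x ≤ 1/2) : bconv x a ≤ bconv x b := by
  unfold bconv; nlinarith

lemma bconv_strict_mono {a b x : ℝ} (hab : a < b) (hx : x < 1/2) : bconv x a < bconv x b := by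
  unfold bconv; nlinarith

lemma hasDerivAt_bconv (t x : ℝ) : HasDerivAt (fun y => bconv y t) (1 - 2*t) x := by
  unfold bconv
  have h := ((hasDerivAt_id x).mul_const (1-t)).add (((hasDerivAt_id x).const_sub 1).const_mul t)
  exact h.congr_deriv (by ring)

lemma hasDerivAt_gg {t x : ℝ} (ht : t ∈ Icc 0 (1/2:ℝ)) (hx : x ∈ Ioo 0 (1/2:ℝ)) :
    HasDerivAt (gg t) (psi t x) x := by
  have hm0 : 0 < bconv x t := bconv_pos ht.1 ht.2 hx.1 hx.2.le
  have hm2 : bconv x t ≤ 1/2 := bconv_le_half ht.2 hx.2.le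
  have hb := Real.hasDerivAt_binEntropy (p := bconv x t) (ne_of_gt hm0) (by linarith)
  have h := (hb.comp x (hasDerivAt_bconv t x)).sub_const (Real.binEntropy t)
  have h2 : HasDerivAt (gg t) ((Real.log (1 - bconv x t) - Real.log (bconv x t)) * (1-2*t)) x := h
  simpa [psi, Lm, mul_comm] using h2

lemma hasDerivAt_psi {t x : ℝ} (ht : t ∈ Icc 0 (1/2:ℝ)) (hx : x ∈ Ioo 0 (1/2:ℝ)) :
    HasDerivAt (psi t) (-(phi t x)) x := by
  have hm0 : 0 < bconv x t := bconv_pos ht.1 ht.2 hx.1 hx.2.le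
  have hm2 : bconv x t ≤ 1/2 := bconv_le_half ht.2 hx.2.le
  have hm1 : bconv x t < 1 := by linarith
  have h := ((hasDerivAt_Lm hm0 hm1).comp x (hasDerivAt_bconv t x)).const_mul (1-2*t)
  refine h.congr_deriv (Eq.symm ?_)
  unfold phi
  have h1 : bconv x t ≠ 0 := ne_of_gt hm0
  have h2 : (1:ℝ) - bconv x t ≠ 0 := by linarith
  field_simp
  ring

lemma continuous_gg (t : ℝ) : Continuous (gg t) := by
  unfold gg bconv
  exact (Real.binEntropy_continuous.comp (by continuity)).sub continuous_const

lemma psi_nonneg {t x : ℝ} (ht : t ∈ Icc 0 (1/2:ℝ)) (hx : x ∈ Ioo 0 (1/2:ℝ)) :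
    0 ≤ psi t x := by
  have hm0 : 0 < bconv x t := bconv_pos ht.1 ht.2 hx.1 hx.2.le
  have hm2 : bconv x t ≤ 1/2 := bconv_le_half ht.2 hx.2.le
  exact mul_nonneg (by linarith [ht.2]) (Lm_nonneg hm0 hm2)

lemma psi_le {a b x : ℝ} (h0 : 0 ≤ a) (hab : a ≤ b) (hb : b ≤ 1/2)
    (hx : x ∈ Ioo 0 (1/2:ℝ)) : psi b x ≤ psi a x := by
  have hma : 0 < bconv x a := bconv_pos h0 (hab.trans hb) hx.1 hx.2.le
  have hma2 : bconv x a ≤ 1/2 := bconv_le_half (hab.trans hb) hx.2.le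
  have hmb2 : bconv x b ≤ 1/2 := bconv_le_half hb hx.2.le
  have hmm : bconv x a ≤ bconv x b := bconv_mono hab hx.2.le
  calc (1-2*b) * Lm (bconv x b) ≤ (1-2*b) * Lm (bconv x a) :=
        mul_le_mul_of_nonneg_left (Lm_anti_le hma hmm (by linarith)) (by linarith)
    _ ≤ (1-2*a) * Lm (bconv x a) :=
        mul_le_mul_of_nonneg_right (by linarith) (Lm_nonneg hma hma2)

lemma psi_lt {a b x : ℝ} (h0 : 0 ≤ a) (hab : a < b) (hb : b ≤ 1/2)
    (hx : x ∈ Ioo 0 (1/2:ℝ)) : psi b x < psi a x := by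
  have hma : 0 < bconv x a := bconv_pos h0 (hab.le.trans hb) hx.1 hx.2.le
  have hma2 : bconv x a < 1/2 := bconv_lt_half (by linarith) hx.2
  have hmb2 : bconv x b ≤ 1/2 := bconv_le_half hb hx.2.le
  have hmm : bconv x a ≤ bconv x b := bconv_mono hab.le hx.2.le
  calc (1-2*b) * Lm (bconv x b) ≤ (1-2*b) * Lm (bconv x a) :=
        mul_le_mul_of_nonneg_left (Lm_anti_le hma hmm (by linarith)) (by linarith)
    _ < (1-2*a) * Lm (bconv x a) :=
        mul_lt_mul_of_pos_right (by linarith) (Lm_pos hma hma2)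

lemma gg_sub_monotoneOn {a b : ℝ} (h0 : 0 ≤ a) (hab : a ≤ b) (hb : b ≤ 1/2) :
    MonotoneOn (fun x => gg a x - gg b x) (Icc 0 (1/2:ℝ)) := by
  apply monotoneOn_of_deriv_nonneg (convex_Icc _ _)
  · exact ((continuous_gg a).sub (continuous_gg b)).continuousOn
  · rw [interior_Icc]
    intro z hz
    exact ((hasDerivAt_gg ⟨h0, hab.trans hb⟩ hz).sub
      (hasDerivAt_gg ⟨h0.trans hab, hb⟩ hz)).differentiableAt.differentiableWithinAt
  · rw [interior_Icc]
    intro z hz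
    erw [((hasDerivAt_gg ⟨h0, hab.trans hb⟩ hz).sub (hasDerivAt_gg ⟨h0.trans hab, hb⟩ hz)).deriv]
    linarith [psi_le h0 hab hb hz]

lemma gg_sub_nonneg {a b : ℝ} (h0 : 0 ≤ a) (hab : a ≤ b) (hb : b ≤ 1/2)
    {x : ℝ} (hx : x ∈ Icc 0 (1/2:ℝ)) : 0 ≤ gg a x - gg b x := by
  have := gg_sub_monotoneOn h0 hab hb (show (0:ℝ) ∈ Icc 0 (1/2:ℝ) by norm_num) hx hx.1
  simpa [gg_zero] using this

lemma gg_sub_pos {a b : ℝ} (h0 : 0 ≤ a) (hab : a < b) (hb : b ≤ 1/2)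
    {x : ℝ} (hx : x ∈ Ioc 0 (1/2:ℝ)) : 0 < gg a x - gg b x := by
  have hs : StrictMonoOn (fun x => gg a x - gg b x) (Icc 0 (1/2:ℝ)) := by
    apply strictMonoOn_of_deriv_pos (convex_Icc _ _)
    · exact ((continuous_gg a).sub (continuous_gg b)).continuousOn
    · rw [interior_Icc]
      intro z hz
      erw [((hasDerivAt_gg ⟨h0, hab.le.trans hb⟩ hz).sub
        (hasDerivAt_gg ⟨h0.trans hab.le, hb⟩ hz)).deriv]
      linarith [psi_lt h0 hab hb hz]
  have := hs (show (0:ℝ) ∈ Icc 0 (1/2:ℝ) by norm_num) ⟨hx.1.le, hx.2⟩ hx.1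
  simpa [gg_zero] using this

lemma uu_bconv (t x : ℝ) : uu (bconv x t) = (1-2*x) * psi t x := by
  unfold uu psi; rw [one_sub_two_bconv]; ring

lemma ww_bconv (t x : ℝ) : ww (bconv x t) = (1-2*x)^2 * phi t x := by
  unfold ww phi
  rw [show (1 - 2*bconv x t)^2 = (1-2*x)^2*(1-2*t)^2 from by rw [one_sub_two_bconv]; ring,
    mul_div_assoc]

lemma numer_nonneg {a b c z : ℝ} (h0 : 0 ≤ a) (hab : a < b) (hbc : b < c) (hc : c ≤ 1/2)
    (hz : z ∈ Ioo 0 (1/2:ℝ)) :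
    0 ≤ (phi c z - phi b z) * (psi a z - psi b z)
        + (psi b z - psi c z) * (phi a z - phi b z) := by
  have hm1 : 0 < bconv z a := bconv_pos h0 (by linarith) hz.1 hz.2.le
  have hm12 : bconv z a < bconv z b := bconv_strict_mono hab hz.2
  have hm23 : bconv z b < bconv z c := bconv_strict_mono hbc hz.2
  have hm3 : bconv z c ≤ 1/2 := bconv_le_half hc hz.2.le
  have hkey := slope_lemma hm1 hm12 hm23 hm3
  rw [uu_bconv, uu_bconv, uu_bconv, ww_bconv, ww_bconv, ww_bconv] at hkey
  have h3 : (0:ℝ) < (1-2*z)^3 := by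
    have : 0 < 1 - 2*z := by linarith [hz.2]
    positivity
  have h4 : (1-2*z)^3 * ((psi b z - psi c z) * (phi b z - phi a z)) ≤
      (1-2*z)^3 * ((phi c z - phi b z) * (psi a z - psi b z)) := by
    linear_combination hkey
  have := le_of_mul_le_mul_left h4 h3
  linarith

lemma cross' {a b c x y : ℝ} (h0 : 0 ≤ a) (hab : a < b) (hbc : b < c) (hc : c ≤ 1/2)
    (hx : x ∈ Ioo 0 (1/2:ℝ)) (hy : y ∈ Ioo 0 (1/2:ℝ)) (hxy : x ≤ y) :
    (psi b x - psi c x) * (psi a y - psi b y) ≤ (psi b y - psi c y) * (psi a x - psi b x) := by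
  have hta : a ∈ Icc 0 (1/2:ℝ) := ⟨h0, by linarith⟩
  have htb : b ∈ Icc 0 (1/2:ℝ) := ⟨by linarith, by linarith⟩
  have htc : c ∈ Icc 0 (1/2:ℝ) := ⟨by linarith, hc⟩
  have hden : ∀ z ∈ Ioo 0 (1/2:ℝ), 0 < psi a z - psi b z := fun z hz =>
    sub_pos.2 (psi_lt h0 hab (by linarith) hz)
  have hq : MonotoneOn (fun z => (psi b z - psi c z) / (psi a z - psi b z)) (Ioo 0 (1/2:ℝ)) := by
    apply monotoneOn_of_deriv_nonneg (convex_Ioo _ _)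
    · intro z hz
      exact (((hasDerivAt_psi htb hz).continuousAt.sub
        (hasDerivAt_psi htc hz).continuousAt).div
        ((hasDerivAt_psi hta hz).continuousAt.sub (hasDerivAt_psi htb hz).continuousAt)
        (ne_of_gt (hden z hz))).continuousWithinAt
    · rw [interior_Ioo]
      intro z hz
      exact (((hasDerivAt_psi htb hz).sub (hasDerivAt_psi htc hz)).div
        ((hasDerivAt_psi hta hz).sub (hasDerivAt_psi htb hz))
        (ne_of_gt (hden z hz))).differentiableAt.differentiableWithinAt
    · rw [interior_Ioo]
      intro z hz
      erw [(((hasDerivAt_psi htb hz).sub (hasDerivAt_psi htc hz)).div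
        ((hasDerivAt_psi hta hz).sub (hasDerivAt_psi htb hz))
        (ne_of_gt (hden z hz))).deriv]
      apply div_nonneg _ (sq_nonneg _)
      have := numer_nonneg h0 hab hbc hc hz
      simp only [Pi.sub_apply]
      linarith
  have hqq := hq hx hy hxy
  rw [div_le_div_iff₀ (hden x hx) (hden y hy)] at hqq
  linarith

lemma cross {a b c : ℝ} (h0 : 0 ≤ a) (hab : a ≤ b) (hbc : b ≤ c) (hc : c ≤ 1/2)
    {x y : ℝ} (hx : x ∈ Icc 0 (1/2:ℝ)) (hy : y ∈ Icc 0 (1/2:ℝ)) (hxy : x ≤ y) :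
    (gg b x - gg c x) * (gg a y - gg b y) ≤ (gg b y - gg c y) * (gg a x - gg b x) := by
  rcases eq_or_lt_of_le hab with rfl | hab'
  · simp
  rcases eq_or_lt_of_le hbc with rfl | hbc'
  · simp
  rcases eq_or_lt_of_le hx.1 with hx0 | hx0
  · rw [← hx0]
    simp [gg_zero]
  have hta : a ∈ Icc 0 (1/2:ℝ) := ⟨h0, by linarith⟩
  have htb : b ∈ Icc 0 (1/2:ℝ) := ⟨by linarith, by linarith⟩
  have htc : c ∈ Icc 0 (1/2:ℝ) := ⟨by linarith, hc⟩
  have hd1pos : ∀ z ∈ Ioc 0 (1/2:ℝ), 0 < gg a z - gg b z := fun z hz =>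
    gg_sub_pos h0 hab' (by linarith) hz
  have hρ : MonotoneOn (fun z => (gg b z - gg c z) / (gg a z - gg b z)) (Ioc 0 (1/2:ℝ)) := by
    apply monotoneOn_of_deriv_nonneg (convex_Ioc _ _)
    · apply ContinuousOn.div
      · exact ((continuous_gg b).sub (continuous_gg c)).continuousOn
      · exact ((continuous_gg a).sub (continuous_gg b)).continuousOn
      · intro z hz; exact ne_of_gt (hd1pos z hz)
    · rw [interior_Ioc]
      intro z hz
      exact (((hasDerivAt_gg htb hz).sub (hasDerivAt_gg htc hz)).div
        ((hasDerivAt_gg hta hz).sub (hasDerivAt_gg htb hz))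
        (ne_of_gt (hd1pos z ⟨hz.1, hz.2.le⟩))).differentiableAt.differentiableWithinAt
    · rw [interior_Ioc]
      intro z hz
      erw [(((hasDerivAt_gg htb hz).sub (hasDerivAt_gg htc hz)).div
        ((hasDerivAt_gg hta hz).sub (hasDerivAt_gg htb hz))
        (ne_of_gt (hd1pos z ⟨hz.1, hz.2.le⟩))).deriv]
      apply div_nonneg _ (sq_nonneg _)
      -- key: (psi b z - psi c z) * (gg a z - gg b z) - (gg b z - gg c z) * (psi a z - psi b z) ≥ 0
      have hΦ : MonotoneOn (fun t => (psi b z - psi c z) * (gg a t - gg b t)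
          - (psi a z - psi b z) * (gg b t - gg c t)) (Icc 0 z) := by
        apply monotoneOn_of_deriv_nonneg (convex_Icc _ _)
        · apply ContinuousOn.sub
          · exact (continuous_const.mul ((continuous_gg a).sub (continuous_gg b))).continuousOn
          · exact (continuous_const.mul ((continuous_gg b).sub (continuous_gg c))).continuousOn
        · rw [interior_Icc]
          intro t ht
          have ht' : t ∈ Ioo 0 (1/2:ℝ) := ⟨ht.1, lt_trans ht.2 hz.2⟩
          exact ((((hasDerivAt_gg hta ht').sub (hasDerivAt_gg htb ht')).const_mul _).sub
            (((hasDerivAt_gg htb ht').sub (hasDerivAt_gg htc ht')).const_mul _)).differentiableAt.differentiableWithinAt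
        · rw [interior_Icc]
          intro t ht
          have ht' : t ∈ Ioo 0 (1/2:ℝ) := ⟨ht.1, lt_trans ht.2 hz.2⟩
          erw [((((hasDerivAt_gg hta ht').sub (hasDerivAt_gg htb ht')).const_mul _).sub
            (((hasDerivAt_gg htb ht').sub (hasDerivAt_gg htc ht')).const_mul _)).deriv]
          have := cross' h0 hab' hbc' hc ht' hz ht.2.le
          linarith
      have h2 := hΦ (show (0:ℝ) ∈ Icc 0 z from ⟨le_rfl, hz.1.le⟩)
        (show z ∈ Icc 0 z from ⟨hz.1.le, le_rfl⟩) hz.1.le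
      simp only [gg_zero] at h2
      have h2' : 0 ≤ (psi b z - psi c z) * (gg a z - gg b z)
          - (psi a z - psi b z) * (gg b z - gg c z) := by
        have : (psi b z - psi c z) * (gg a 0 - gg b 0)
            - (psi a z - psi b z) * (gg b 0 - gg c 0) = 0 := by simp [gg_zero]
        linarith [hΦ (show (0:ℝ) ∈ Icc 0 z from ⟨le_rfl, hz.1.le⟩)
          (show z ∈ Icc 0 z from ⟨hz.1.le, le_rfl⟩) hz.1.le, this]
      simp only [Pi.sub_apply]
      linarith
  have hx' : x ∈ Ioc 0 (1/2:ℝ) := ⟨hx0, hx.2⟩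
  have hy' : y ∈ Ioc 0 (1/2:ℝ) := ⟨lt_of_lt_of_le hx0 hxy, hy.2⟩
  have hqq := hρ hx' hy' hxy
  rw [div_le_div_iff₀ (hd1pos x hx') (hd1pos y hy')] at hqq
  linarith


lemma core {a b c ca cc : ℝ} (h0 : 0 ≤ a) (hab : a ≤ b) (hbc : b ≤ c) (hc : c ≤ 1/2)
    {E : ℝ → ℝ}
    (hE : ∀ x, E x = ca * (gg a x - gg b x) - cc * (gg b x - gg c x))
    (hE2 : 0 ≤ E (1/2)) :
    (∀ x ∈ Icc (0:ℝ) (1/2), 0 ≤ E x) ∨ (∀ x ∈ Icc (0:ℝ) (1/2), E x ≤ E (1/2)) := by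
  have hb2 : b ≤ 1/2 := hbc.trans hc
  have hb0 : 0 ≤ b := h0.trans hab
  have hhalf : (1/2:ℝ) ∈ Icc (0:ℝ) (1/2) := by norm_num
  have hd1 : ∀ x ∈ Icc (0:ℝ) (1/2), 0 ≤ gg a x - gg b x := fun x hx => gg_sub_nonneg h0 hab hb2 hx
  have hd2 : ∀ x ∈ Icc (0:ℝ) (1/2), 0 ≤ gg b x - gg c x := fun x hx => gg_sub_nonneg hb0 hbc hc hx
  have hd1m := gg_sub_monotoneOn h0 hab hb2
  have hd2m := gg_sub_monotoneOn hb0 hbc hc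
  rw [hE] at hE2
  rcases le_total 0 ca with hca | hca <;> rcases le_total 0 cc with hcc | hcc
  · -- hard case (iii) : left branch
    left
    intro x hx
    rw [hE]
    have hcr := cross h0 hab hbc hc hx hhalf hx.2
    rcases eq_or_lt_of_le (hd1 _ hhalf) with hh | hh
    · -- gg a (1/2) - gg b (1/2) = 0
      have hd1x : gg a x - gg b x = 0 :=
        le_antisymm (by linarith [hd1m hx hhalf hx.2]) (hd1 x hx)
      have h1 : cc * (gg b (1/2) - gg c (1/2)) = 0 := by
        have hge : 0 ≤ cc * (gg b (1/2) - gg c (1/2)) := mul_nonneg hcc (hd2 _ hhalf)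
        have : cc * (gg b (1/2) - gg c (1/2)) ≤ 0 := by nlinarith [hE2]
        linarith
      rcases mul_eq_zero.1 h1 with h2 | h2
      · rw [h2, hd1x]; ring_nf; nlinarith [hd2 x hx]
      · have hd2x : gg b x - gg c x = 0 :=
          le_antisymm (by linarith [hd2m hx hhalf hx.2]) (hd2 x hx)
        rw [hd1x, hd2x]; simp
    · -- gg a (1/2) - gg b (1/2) > 0
      have h1 := mul_le_mul_of_nonneg_left hcr hcc
      have h2 := mul_le_mul_of_nonneg_right hE2 (hd1 x hx)
      nlinarith [hd1 x hx, hd2 x hx]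
  · -- easy : both terms nonneg
    left
    intro x hx
    rw [hE]
    nlinarith [mul_nonneg hca (hd1 x hx), mul_nonneg (neg_nonneg.2 hcc) (hd2 x hx)]
  · -- easy : E ≤ 0 ≤ E (1/2)
    right
    intro x hx
    rw [hE, hE]
    nlinarith [mul_nonneg (neg_nonneg.2 hca) (hd1 x hx), mul_nonneg hcc (hd2 x hx)]
  · -- hard case (iv) : right branch
    right
    intro x hx
    rw [hE, hE]
    have hcr := cross h0 hab hbc hc hx hhalf hx.2
    rcases le_or_gt (-cc * (gg b x - gg c x)) (-ca * (gg a x - gg b x)) with hle | hgt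
    · nlinarith
    · rcases eq_or_lt_of_le (hd1 x hx) with hd1x | hd1x
      · -- gg a x - gg b x = 0
        rcases eq_or_lt_of_le (hd1 _ hhalf) with hh | hh
        · have hmono := mul_le_mul_of_nonneg_left (hd2m hx hhalf hx.2) (neg_nonneg.2 hcc)
          nlinarith
        · have : gg b x - gg c x ≤ 0 := by nlinarith
          have hd2x : gg b x - gg c x = 0 := le_antisymm this (hd2 x hx)
          nlinarith [hd2x]
      · -- gg a x - gg b x > 0
        have h1 := mul_le_mul_of_nonneg_left hcr (neg_nonneg.2 hcc)
        have h2 := hd1m hx hhalf hx.2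
        nlinarith [hd1 _ hhalf]


lemma main3 (a b c ca cb cc : ℝ) (h0 : 0 ≤ a) (hab : a ≤ b) (hbc : b ≤ c) (hc : c ≤ 1/2)
    (hsum : ca + cb + cc = 0) {E : ℝ → ℝ}
    (hE : ∀ x, E x = ca * gg a x + cb * gg b x + cc * gg c x) (hE2 : 0 ≤ E (1/2)) :
    (∀ x ∈ Icc (0:ℝ) (1/2), 0 ≤ E x) ∨ (∀ x ∈ Icc (0:ℝ) (1/2), E x ≤ E (1/2)) := by
  refine core (ca := ca) (cc := cc) h0 hab hbc hc (fun x => ?_) hE2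
  rw [hE]
  have hcb : cb = -ca - cc := by linarith
  rw [hcb]
  ring

end BSC3

theorem bsc_three_dichotomy' (α : Fin 3 → ℝ) (hα : ∀ i, α i ∈ Set.Icc (0 : ℝ) 1)
    (p q : Fin 3 → ℝ) (hp : ∀ i, 0 ≤ p i) (hq : ∀ i, 0 ≤ q i)
    (hp1 : ∑ i, p i = 1) (hq1 : ∑ i, q i = 1)
    (D : ℝ → ℝ)
    (hD : D = fun x => ∑ i, (p i - q i) *
      (Real.binEntropy (bconv x (α i)) - Real.binEntropy (α i)))
    (hD2 : 0 ≤ D (1 / 2)) :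
    (∀ x ∈ Set.Icc (0 : ℝ) 1, 0 ≤ D x) ∨ (∀ x ∈ Set.Icc (0 : ℝ) 1, D x ≤ D (1 / 2)) := by
  classical
  open BSC3 Set in
  set β : Fin 3 → ℝ := fun i => min (α i) (1 - α i) with hβ
  have hβ0 : ∀ i, 0 ≤ β i := fun i => le_min (hα i).1 (by linarith [(hα i).2])
  have hβh : ∀ i, β i ≤ 1/2 := by
    intro i
    rcases le_total (α i) (1 - α i) with h | h
    · rw [hβ]; simp only [min_eq_left h]; linarith
    · rw [hβ]; simp only [min_eq_right h]; linarith
  have hterm : ∀ i x, Real.binEntropy (bconv x (α i)) - Real.binEntropy (α i) = gg (β i) x := by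
    intro i x
    rcases le_total (α i) (1 - α i) with h | h
    · rw [hβ]; simp only [min_eq_left h]; rfl
    · rw [hβ]; simp only [min_eq_right h]
      unfold gg
      have h1 : bconv x (1 - α i) = 1 - bconv x (α i) := by unfold bconv; ring
      rw [h1, Real.binEntropy_one_sub, Real.binEntropy_one_sub]
  have hD' : ∀ x, D x = (p 0 - q 0) * gg (β 0) x + (p 1 - q 1) * gg (β 1) x
      + (p 2 - q 2) * gg (β 2) x := by
    intro x
    rw [hD]
    simp only [Fin.sum_univ_three]
    rw [hterm 0 x, hterm 1 x, hterm 2 x]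
  have hsum : (p 0 - q 0) + (p 1 - q 1) + (p 2 - q 2) = 0 := by
    rw [Fin.sum_univ_three] at hp1 hq1
    linarith
  have hhalf : (∀ x ∈ Icc (0:ℝ) (1/2), 0 ≤ D x) ∨ (∀ x ∈ Icc (0:ℝ) (1/2), D x ≤ D (1/2)) := by
    rcases le_total (β 0) (β 1) with h01 | h01
    · rcases le_total (β 1) (β 2) with h12 | h12
      · exact main3 (β 0) (β 1) (β 2) (p 0 - q 0) (p 1 - q 1) (p 2 - q 2)
          (hβ0 0) h01 h12 (hβh 2) hsum (fun x => by rw [hD' x]) hD2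
      · rcases le_total (β 0) (β 2) with h02 | h02
        · exact main3 (β 0) (β 2) (β 1) (p 0 - q 0) (p 2 - q 2) (p 1 - q 1)
            (hβ0 0) h02 h12 (hβh 1) (by linarith) (fun x => by rw [hD' x]; ring) hD2
        · exact main3 (β 2) (β 0) (β 1) (p 2 - q 2) (p 0 - q 0) (p 1 - q 1)
            (hβ0 2) h02 h01 (hβh 1) (by linarith) (fun x => by rw [hD' x]; ring) hD2
    · rcases le_total (β 0) (β 2) with h02 | h02
      · exact main3 (β 1) (β 0) (β 2) (p 1 - q 1) (p 0 - q 0) (p 2 - q 2)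
          (hβ0 1) h01 h02 (hβh 2) (by linarith) (fun x => by rw [hD' x]; ring) hD2
      · rcases le_total (β 1) (β 2) with h12 | h12
        · exact main3 (β 1) (β 2) (β 0) (p 1 - q 1) (p 2 - q 2) (p 0 - q 0)
            (hβ0 1) h12 h02 (hβh 0) (by linarith) (fun x => by rw [hD' x]; ring) hD2
        · exact main3 (β 2) (β 1) (β 0) (p 2 - q 2) (p 1 - q 1) (p 0 - q 0)
            (hβ0 2) h12 h01 (hβh 0) (by linarith) (fun x => by rw [hD' x]; ring) hD2
  have hsymm : ∀ x, D (1 - x) = D x := by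
    intro x
    rw [hD]
    apply Finset.sum_congr rfl
    intro i _
    have h1 : bconv (1-x) (α i) = 1 - bconv x (α i) := by unfold bconv; ring
    rw [h1, Real.binEntropy_one_sub]
  rcases hhalf with h | h
  · left
    intro x hx
    rcases le_total x (1/2) with hx2 | hx2
    · exact h x ⟨hx.1, hx2⟩
    · have := h (1-x) ⟨by linarith [hx.2], by linarith⟩
      rwa [hsymm x] at this
  · right
    intro x hx
    rcases le_total x (1/2) with hx2 | hx2
    · exact h x ⟨hx.1, hx2⟩
    · have := h (1-x) ⟨by linarith [hx.2], by linarith⟩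
      rwa [hsymm x] at this

/-- Analytic core of Theorem 5 for the broadcast channel with three binary symmetric channel
state components: the difference `D(x) = I(X;Y₁|S) − I(X;Y₂|S)` (for `X ∼ Bern(x)`) with
`D(1/2) ≥ 0` is either nonnegative on `[0,1]` or maximized at `x = 1/2` on `[0,1]`. -/
theorem bsc_three_dichotomy (α : Fin 3 → ℝ) (hα : ∀ i, α i ∈ Set.Icc (0 : ℝ) 1)
    (p q : Fin 3 → ℝ) (hp : ∀ i, 0 ≤ p i) (hq : ∀ i, 0 ≤ q i)
    (hp1 : ∑ i, p i = 1) (hq1 : ∑ i, q i = 1)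
    (D : ℝ → ℝ)
    (hD : D = fun x => ∑ i, (p i - q i) *
      (Real.binEntropy (bconv x (α i)) - Real.binEntropy (α i)))
    (hD2 : 0 ≤ D (1 / 2)) :
    (∀ x ∈ Set.Icc (0 : ℝ) 1, 0 ≤ D x) ∨ (∀ x ∈ Set.Icc (0 : ℝ) 1, D x ≤ D (1 / 2)) := by
  exact bsc_three_dichotomy' α hα p q hp hq hp1 hq1 D hD hD2
end

section
/- Let α : Fin 3 → [0,1] and p, q : Fin 3 → ℝ with p i ≥ 0, q i ≥ 0 for all i and ∑_i p i = ∑_i q i = 1. Define D : ℝ → ℝ by D(x) = ∑_i (p i − q i) · (binEntropy(x ⋆ α i) − binEntropy(α i)). Then for every x ∈ (0,1), D is twice differentiable at x and deriv (deriv D) x = (p 0 − q 0) · ((1−2·α 2)² · (α 0)·(1−α 0) − (1−2·α 0)² · (α 2)·(1−α 2)) / ((x ⋆ α 0)·(1 − x ⋆ α 0)·(x ⋆ α 2)·(1 − x ⋆ α 2)) + (p 1 − q 1) · ((1−2·α 2)² · (α 1)·(1−α 1) − (1−2·α 1)² · (α 2)·(1−α 2)) / ((x ⋆ α 1)·(1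 − x ⋆ α 1)·(x ⋆ α 2)·(1 − x ⋆ α 2)). -/
lemma bconv_mem {x a : ℝ} (hx : x ∈ Set.Ioo (0:ℝ) 1) (ha : a ∈ Set.Icc (0:ℝ) 1) :
    bconv x a ∈ Set.Ioo (0:ℝ) 1 := by
  obtain ⟨hx0, hx1⟩ := hx; obtain ⟨ha0, ha1⟩ := ha
  unfold bconv
  constructor
  · nlinarith [mul_pos hx0 (show (0:ℝ) < 1-x by linarith), mul_nonneg ha0 (sq_nonneg (1-x)),
      mul_nonneg (show (0:ℝ) ≤ 1-a by linarith) (sq_nonneg x)]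
  · nlinarith [mul_pos hx0 (show (0:ℝ) < 1-x by linarith), mul_nonneg ha0 (sq_nonneg (1-x)),
      mul_nonneg (show (0:ℝ) ≤ 1-a by linarith) (sq_nonneg x)]

lemma hasDerivAt_bconv (a x : ℝ) : HasDerivAt (fun y => bconv y a) (1 - 2*a) x := by
  unfold bconv
  have h : HasDerivAt (fun y => y * (1 - a) + a * (1 - y)) (1 * (1 - a) + (0 * (1 - x) + a * (0 - 1))) x := ((hasDerivAt_id x).mul_const (1 - a)).add ((hasDerivAt_const x a).mul
      ((hasDerivAt_const x (1:ℝ)).sub (hasDerivAt_id x)))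
  convert h using 1
  ring

lemma bconv_key {x a b : ℝ} (ha0 : bconv x a ≠ 0) (ha1 : 1 - bconv x a ≠ 0)
    (hb0 : bconv x b ≠ 0) (hb1 : 1 - bconv x b ≠ 0) :
    -((1-2*a)^2 / (bconv x a * (1 - bconv x a))) + (1-2*b)^2 / (bconv x b * (1 - bconv x b))
      = ((1 - 2 * b) ^ 2 * a * (1 - a) - (1 - 2 * a) ^ 2 * b * (1 - b)) /
        (bconv x a * (1 - bconv x a) * (bconv x b) * (1 - bconv x b)) := by
  rw [neg_div', div_add_div _ _ (mul_ne_zero ha0 ha1) (mul_ne_zero hb0 hb1),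
    div_eq_div_iff (mul_ne_zero (mul_ne_zero ha0 ha1) (mul_ne_zero hb0 hb1))
      (mul_ne_zero (mul_ne_zero (mul_ne_zero ha0 ha1) hb0) hb1)]
  unfold bconv
  ring

lemma hasDerivAt_bin_comp {a x : ℝ} (hx : x ∈ Set.Ioo (0:ℝ) 1) (ha : a ∈ Set.Icc (0:ℝ) 1) :
    HasDerivAt (fun y => Real.binEntropy (bconv y a))
      ((Real.log (1 - bconv x a) - Real.log (bconv x a)) * (1 - 2*a)) x := by
  have ht := bconv_mem hx ha
  exact (Real.hasDerivAt_binEntropy ht.1.ne' (ne_of_lt ht.2)).comp x (hasDerivAt_bconv a x)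

lemma hasDerivAt_logterm {a x : ℝ} (hx : x ∈ Set.Ioo (0:ℝ) 1) (ha : a ∈ Set.Icc (0:ℝ) 1) :
    HasDerivAt (fun y => (Real.log (1 - bconv y a) - Real.log (bconv y a)) * (1 - 2*a))
      (-( (1-2*a)^2 / (bconv x a * (1 - bconv x a)))) x := by
  have ht := bconv_mem hx ha
  have h1 : HasDerivAt (fun y => Real.log (1 - bconv y a)) ((1 - bconv x a)⁻¹ * (0 - (1 - 2*a))) x :=
    HasDerivAt.comp (h₂ := Real.log) x (Real.hasDerivAt_log (by linarith [ht.2] : (1:ℝ) - bconv x a ≠ 0))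
      (((hasDerivAt_const x (1:ℝ)).fun_sub (hasDerivAt_bconv a x)))
  have h2 : HasDerivAt (fun y => Real.log (bconv y a)) ((bconv x a)⁻¹ * (1 - 2*a)) x :=
    HasDerivAt.comp (h₂ := Real.log) x (Real.hasDerivAt_log ht.1.ne') (hasDerivAt_bconv a x)
  have : HasDerivAt (fun y => (Real.log (1 - bconv y a) - Real.log (bconv y a)) * (1 - 2*a))
      (((1 - bconv x a)⁻¹ * (0 - (1 - 2*a)) - (bconv x a)⁻¹ * (1 - 2*a)) * (1 - 2*a)) x :=
    ((h1.sub h2).mul_const (1 - 2*a))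
  convert this using 1
  have h0 : bconv x a ≠ 0 := ht.1.ne'
  have h1' : (1:ℝ) - bconv x a ≠ 0 := by linarith [ht.2]
  field_simp
  ring

/-- The second-derivative formula for `D(x) = I(X;Y₁|S) − I(X;Y₂|S)` in the proof of
Theorem 5 (broadcast channel with three binary symmetric channel state components). -/
theorem bsc_three_second_deriv (α : Fin 3 → ℝ) (hα : ∀ i, α i ∈ Set.Icc (0 : ℝ) 1)
    (p q : Fin 3 → ℝ) (hp : ∀ i, 0 ≤ p i) (hq : ∀ i, 0 ≤ q i)
    (hp1 : ∑ i, p i = 1) (hq1 : ∑ i, q i = 1)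
    (D : ℝ → ℝ)
    (hD : D = fun x => ∑ i, (p i - q i) *
      (Real.binEntropy (bconv x (α i)) - Real.binEntropy (α i))) :
    ∀ x ∈ Set.Ioo (0 : ℝ) 1,
      DifferentiableAt ℝ D x ∧ DifferentiableAt ℝ (deriv D) x ∧
      deriv (deriv D) x =
        (p 0 - q 0) *
            ((1 - 2 * α 2) ^ 2 * α 0 * (1 - α 0) - (1 - 2 * α 0) ^ 2 * α 2 * (1 - α 2)) /
            (bconv x (α 0) * (1 - bconv x (α 0)) * (bconv x (α 2)) * (1 - bconv x (α 2))) +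
          (p 1 - q 1) *
            ((1 - 2 * α 2) ^ 2 * α 1 * (1 - α 1) - (1 - 2 * α 1) ^ 2 * α 2 * (1 - α 2)) /
            (bconv x (α 1) * (1 - bconv x (α 1)) * (bconv x (α 2)) * (1 - bconv x (α 2))) := by
  intro x hx
  set F : ℝ → ℝ := fun y => ∑ i, (p i - q i) *
      ((Real.log (1 - bconv y (α i)) - Real.log (bconv y (α i))) * (1 - 2*α i)) with hF
  have hDF : ∀ y ∈ Set.Ioo (0:ℝ) 1, HasDerivAt D (F y) y := by
    intro y hy
    rw [hD]
    exact HasDerivAt.fun_sum (fun i _ => (((hasDerivAt_bin_comp hy (hα i)).sub_const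
      (Real.binEntropy (α i))).const_mul (p i - q i)))
  have hderivD : Set.EqOn (deriv D) F (Set.Ioo 0 1) := fun y hy => (hDF y hy).deriv
  have hFx : HasDerivAt F (∑ i, (p i - q i) *
      (-((1-2*α i)^2 / (bconv x (α i) * (1 - bconv x (α i)))))) x :=
    HasDerivAt.fun_sum (fun i _ => (hasDerivAt_logterm hx (hα i)).const_mul (p i - q i))
  have heq : deriv D =ᶠ[nhds x] F :=
    Filter.eventuallyEq_of_mem (isOpen_Ioo.mem_nhds hx) hderivD
  refine ⟨(hDF x hx).differentiableAt, ?_, ?_⟩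
  · exact (heq.differentiableAt_iff).2 hFx.differentiableAt
  · rw [Filter.EventuallyEq.deriv_eq heq, hFx.deriv]
    have hc : (p 2 - q 2) = -((p 0 - q 0) + (p 1 - q 1)) := by
      have := hp1; have := hq1
      rw [Fin.sum_univ_three] at hp1 hq1
      linarith
    have h0 := bconv_mem hx (hα 0)
    have h1 := bconv_mem hx (hα 1)
    have h2 := bconv_mem hx (hα 2)
    have e0 : bconv x (α 0) ≠ 0 := h0.1.ne'
    have e0' : (1:ℝ) - bconv x (α 0) ≠ 0 := by linarith [h0.2]
    have e1 : bconv x (α 1) ≠ 0 := h1.1.ne'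
    have e1' : (1:ℝ) - bconv x (α 1) ≠ 0 := by linarith [h1.2]
    have e2 : bconv x (α 2) ≠ 0 := h2.1.ne'
    have e2' : (1:ℝ) - bconv x (α 2) ≠ 0 := by linarith [h2.2]
    rw [Fin.sum_univ_three, hc]
    have k0 := bconv_key e0 e0' e2 e2'
    have k1 := bconv_key e1 e1' e2 e2'
    linear_combination (p 0 - q 0) * k0 + (p 1 - q 1) * k1
end

section
/- Let N₁ > 0, N₂ > 0, θ ∈ [0,1], and a, b, ρ ∈ ℝ with ρ² < 1. Set T = a² + b² + 2abρ. Then θ · log( ((a²(1−ρ²)+N₁)·(b²(1−ρ²)+N₁)) / (N₁·(1−ρ²)·(T+N₁)) ) + (1−θ) · log( ((a²(1−ρ²)+N₂)·(b²(1−ρ²)+N₂)) / (N₂·(1−ρ²)·(T+N₂)) ) ≥ 0. Moreover, if 0 < θ < 1 and N₁ ≠ N₂, then equality holds if and only if ρ = 0 and a·b = 0. -/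
private lemma dpc_aux (N a b ρ T : ℝ) (hN : 0 < N) (hρ : ρ ^ 2 < 1)
    (hT : T = a ^ 2 + b ^ 2 + 2 * a * b * ρ) :
    0 ≤ Real.log ((a ^ 2 * (1 - ρ ^ 2) + N) * (b ^ 2 * (1 - ρ ^ 2) + N) /
      (N * (1 - ρ ^ 2) * (T + N))) ∧
    (Real.log ((a ^ 2 * (1 - ρ ^ 2) + N) * (b ^ 2 * (1 - ρ ^ 2) + N) /
      (N * (1 - ρ ^ 2) * (T + N))) = 0 ↔ a * b * (1 - ρ ^ 2) = ρ * N) := by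
  have hs : 0 < 1 - ρ ^ 2 := by linarith
  have hTpos : 0 < T + N := by nlinarith [sq_nonneg (a + b * ρ), sq_nonneg b]
  have hden : 0 < N * (1 - ρ ^ 2) * (T + N) := by positivity
  have hkey : (a ^ 2 * (1 - ρ ^ 2) + N) * (b ^ 2 * (1 - ρ ^ 2) + N) -
      N * (1 - ρ ^ 2) * (T + N) = (a * b * (1 - ρ ^ 2) - ρ * N) ^ 2 := by
    subst hT; ring
  have hge : 1 ≤ (a ^ 2 * (1 - ρ ^ 2) + N) * (b ^ 2 * (1 - ρ ^ 2) + N) /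
      (N * (1 - ρ ^ 2) * (T + N)) := by
    rw [le_div_iff₀ hden]
    nlinarith [sq_nonneg (a * b * (1 - ρ ^ 2) - ρ * N)]
  refine ⟨Real.log_nonneg hge, ?_⟩
  constructor
  · intro h
    have h1 : (a ^ 2 * (1 - ρ ^ 2) + N) * (b ^ 2 * (1 - ρ ^ 2) + N) /
        (N * (1 - ρ ^ 2) * (T + N)) = 1 := by
      rcases (Real.log_eq_zero.mp h) with h' | h' | h'
      · linarith
      · exact h'
      · linarith
    have h2 : (a ^ 2 * (1 - ρ ^ 2) + N) * (b ^ 2 * (1 - ρ ^ 2) + N) =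
        N * (1 - ρ ^ 2) * (T + N) := by
      field_simp at h1; linarith
    have : (a * b * (1 - ρ ^ 2) - ρ * N) ^ 2 = 0 := by linarith
    have := pow_eq_zero_iff (n := 2) (by norm_num) |>.mp this
    linarith
  · intro h
    have h2 : (a ^ 2 * (1 - ρ ^ 2) + N) * (b ^ 2 * (1 - ρ ^ 2) + N) =
        N * (1 - ρ ^ 2) * (T + N) := by
      have : (a * b * (1 - ρ ^ 2) - ρ * N) ^ 2 = 0 := by rw [show a * b * (1 - ρ ^ 2) - ρ * N = 0 by linarith]; ring
      linarith
    rw [h2, div_self (ne_of_gt hden), Real.log_one]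

/-- The key inequality (with its equality condition) in the proof that dirty paper coding is
suboptimal for the broadcast channel with two scalar Gaussian channel state components. -/
theorem dpc_key_inequality (N₁ N₂ : ℝ) (hN₁ : 0 < N₁) (hN₂ : 0 < N₂)
    (θ : ℝ) (hθ : θ ∈ Set.Icc (0 : ℝ) 1)
    (a b ρ : ℝ) (hρ : ρ ^ 2 < 1)
    (T : ℝ) (hT : T = a ^ 2 + b ^ 2 + 2 * a * b * ρ) :
    0 ≤ θ * Real.log ((a ^ 2 * (1 - ρ ^ 2) + N₁) * (b ^ 2 * (1 - ρ ^ 2) + N₁) /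
          (N₁ * (1 - ρ ^ 2) * (T + N₁))) +
        (1 - θ) * Real.log ((a ^ 2 * (1 - ρ ^ 2) + N₂) * (b ^ 2 * (1 - ρ ^ 2) + N₂) /
          (N₂ * (1 - ρ ^ 2) * (T + N₂))) ∧
      (0 < θ → θ < 1 → N₁ ≠ N₂ →
        (θ * Real.log ((a ^ 2 * (1 - ρ ^ 2) + N₁) * (b ^ 2 * (1 - ρ ^ 2) + N₁) /
            (N₁ * (1 - ρ ^ 2) * (T + N₁))) +
          (1 - θ) * Real.log ((a ^ 2 * (1 - ρ ^ 2) + N₂) * (b ^ 2 * (1 - ρ ^ 2) + N₂) /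
            (N₂ * (1 - ρ ^ 2) * (T + N₂))) = 0 ↔ ρ = 0 ∧ a * b = 0)) := by
  obtain ⟨hθ0, hθ1⟩ := hθ
  obtain ⟨hL1, hE1⟩ := dpc_aux N₁ a b ρ T hN₁ hρ hT
  obtain ⟨hL2, hE2⟩ := dpc_aux N₂ a b ρ T hN₂ hρ hT
  have h1 : 0 ≤ θ * Real.log ((a ^ 2 * (1 - ρ ^ 2) + N₁) * (b ^ 2 * (1 - ρ ^ 2) + N₁) /
      (N₁ * (1 - ρ ^ 2) * (T + N₁))) := mul_nonneg hθ0 hL1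
  have h2 : 0 ≤ (1 - θ) * Real.log ((a ^ 2 * (1 - ρ ^ 2) + N₂) * (b ^ 2 * (1 - ρ ^ 2) + N₂) /
      (N₂ * (1 - ρ ^ 2) * (T + N₂))) := mul_nonneg (by linarith) hL2
  refine ⟨by linarith, ?_⟩
  intro hθp hθq hNe
  constructor
  · intro hsum
    have hz1 : Real.log ((a ^ 2 * (1 - ρ ^ 2) + N₁) * (b ^ 2 * (1 - ρ ^ 2) + N₁) /
        (N₁ * (1 - ρ ^ 2) * (T + N₁))) = 0 := by
      have : θ * Real.log ((a ^ 2 * (1 - ρ ^ 2) + N₁) * (b ^ 2 * (1 - ρ ^ 2) + N₁) /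
          (N₁ * (1 - ρ ^ 2) * (T + N₁))) = 0 := by linarith
      rcases mul_eq_zero.mp this with h | h
      · linarith
      · exact h
    have hz2 : Real.log ((a ^ 2 * (1 - ρ ^ 2) + N₂) * (b ^ 2 * (1 - ρ ^ 2) + N₂) /
        (N₂ * (1 - ρ ^ 2) * (T + N₂))) = 0 := by
      have : (1 - θ) * Real.log ((a ^ 2 * (1 - ρ ^ 2) + N₂) * (b ^ 2 * (1 - ρ ^ 2) + N₂) /
          (N₂ * (1 - ρ ^ 2) * (T + N₂))) = 0 := by linarith
      rcases mul_eq_zero.mp this with h | h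
      · linarith
      · exact h
    have e1 := hE1.mp hz1
    have e2 := hE2.mp hz2
    have hρ0 : ρ = 0 := by
      by_contra h
      have : N₁ = N₂ := by
        have := sub_eq_zero.mpr (e1.symm.trans e2)
        have : ρ * (N₁ - N₂) = 0 := by linarith
        rcases mul_eq_zero.mp this with h' | h'
        · exact absurd h' h
        · linarith
      exact hNe this
    refine ⟨hρ0, ?_⟩
    rw [hρ0] at e1
    have hs : (1 : ℝ) - 0 ^ 2 ≠ 0 := by norm_num
    have := mul_eq_zero.mp (by linarith : a * b * (1 - (0:ℝ) ^ 2) = 0)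
    rcases this with h | h
    · exact h
    · exact absurd h hs
  · rintro ⟨hρ0, hab⟩
    have e1 : a * b * (1 - ρ ^ 2) = ρ * N₁ := by rw [hρ0, hab]; ring
    have e2 : a * b * (1 - ρ ^ 2) = ρ * N₂ := by rw [hρ0, hab]; ring
    rw [hE1.mpr e1, hE2.mpr e2]; ring
end

section
/- Let U, A, B be nonempty finite types and let r be a joint pmf on U × A × B. Denote by F₁ the A-coordinate and by F₂ the B-coordinate. Let p₁, p₂ ∈ [0,1] and λ ∈ ℝ satisfy λ ≤ 1 and 1 − p₁ ≤ λ·(1 − p₂). Then (λ·(1−p₂) − (1−p₁)) · H(F₂|U) + (λ·p₂ − p₁) · H(F₁|U) ≤ (λ·(1−p₂) − (1−p₁)) · H(F₂|F₁), where H(F₂|U) is the conditional entropy computed from the (U,B)-marginal of r, H(F₁|U) from the (U,A)-marginal of r, and H(F₂|F₁) from the (A,B)-marginal of r. -/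

lemma negMulLog_sum_le {ι : Type*} (s : Finset ι) (f : ι → ℝ) (hf : ∀ i ∈ s, 0 ≤ f i) :
    Real.negMulLog (∑ i ∈ s, f i) ≤ ∑ i ∈ s, Real.negMulLog (f i) := by
  have hS : Real.negMulLog (∑ i ∈ s, f i) = ∑ i ∈ s, -(f i * Real.log (∑ j ∈ s, f j)) := by
    simp [Real.negMulLog, Finset.sum_mul]
  rw [hS]
  apply Finset.sum_le_sum
  intro i hi
  rw [Real.negMulLog, neg_mul, neg_le_neg_iff]
  rcases eq_or_lt_of_le (hf i hi) with h | h
  · simp [← h]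
  · exact mul_le_mul_of_nonneg_left
      (Real.log_le_log h (Finset.single_le_sum hf hi)) (le_of_lt h)

lemma log_sum_ineq {ι : Type*} (s : Finset ι) (x y : ι → ℝ)
    (hx : ∀ i ∈ s, 0 ≤ x i) (hxy : ∀ i ∈ s, x i ≤ y i) :
    ∑ i ∈ s, x i * Real.log (y i / x i) ≤
      (∑ i ∈ s, x i) * Real.log ((∑ i ∈ s, y i) / (∑ i ∈ s, x i)) := by
  set X := ∑ i ∈ s, x i with hX
  set Y := ∑ i ∈ s, y i with hY
  rcases eq_or_lt_of_le (Finset.sum_nonneg hx) with h0 | hXpos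
  · have : ∀ i ∈ s, x i = 0 := by
      intro i hi
      exact le_antisymm (by
        have := (Finset.sum_eq_zero_iff_of_nonneg hx).1 h0.symm
        exact le_of_eq (this i hi)) (hx i hi)
    have hL : ∑ i ∈ s, x i * Real.log (y i / x i) = 0 :=
      Finset.sum_eq_zero (fun i hi => by rw [this i hi]; ring)
    have hX0 : X = 0 := hX.trans h0.symm
    rw [hL, hX0]
    simp
  · have hXY : X ≤ Y := Finset.sum_le_sum hxy
    have hYpos : 0 < Y := lt_of_lt_of_le hXpos hXY
    have key : ∀ i ∈ s, x i * Real.log (y i / x i) ≤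
        x i * Real.log (Y / X) + (y i * X / Y - x i) := by
      intro i hi
      rcases eq_or_lt_of_le (hx i hi) with h | h
      · rw [← h]
        have : 0 ≤ y i := le_trans (hx i hi) (hxy i hi)
        simp
        positivity
      · have hy : 0 < y i := lt_of_lt_of_le h (hxy i hi)
        have hlog : Real.log (y i * X / (x i * Y)) ≤ y i * X / (x i * Y) - 1 :=
          Real.log_le_sub_one_of_pos (by positivity)
        have hsplit : Real.log (y i / x i) =
            Real.log (Y / X) + Real.log (y i * X / (x i * Y)) := by
          rw [Real.log_div hy.ne' h.ne', Real.log_div hYpos.ne' hXpos.ne',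
            Real.log_div (by positivity) (by positivity),
            Real.log_mul hy.ne' hXpos.ne', Real.log_mul h.ne' hYpos.ne']
          ring
        calc x i * Real.log (y i / x i)
            = x i * Real.log (Y / X) + x i * Real.log (y i * X / (x i * Y)) := by
              rw [hsplit]; ring
          _ ≤ x i * Real.log (Y / X) + x i * (y i * X / (x i * Y) - 1) := by
              have := mul_le_mul_of_nonneg_left hlog (le_of_lt h)
              linarith
          _ = x i * Real.log (Y / X) + (y i * X / Y - x i) := by
              field_simp
    calc ∑ i ∈ s, x i * Real.log (y i / x i)
        ≤ ∑ i ∈ s, (x i * Real.log (Y / X) + (y i * X / Y - x i)) :=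
          Finset.sum_le_sum key
      _ = X * Real.log (Y / X) + (Y * X / Y - X) := by
          rw [Finset.sum_add_distrib, Finset.sum_sub_distrib, ← Finset.sum_mul,
            ← Finset.sum_div, ← Finset.sum_mul]
      _ = X * Real.log (Y / X) := by field_simp; ring

lemma term_eq' (x y : ℝ) (hx : 0 ≤ x) (hxy : x ≤ y) :
    Real.negMulLog x + x * Real.log y = x * Real.log (y / x) := by
  rcases eq_or_lt_of_le hx with h | h
  · simp [← h]
  · rw [Real.log_div (lt_of_lt_of_le h hxy).ne' h.ne', Real.negMulLog]
    ring

lemma sum_negMulLog_sub {β : Type*} (s : Finset β) (f : β → ℝ) (hf : ∀ b ∈ s, 0 ≤ f b) :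
    ∑ b ∈ s, Real.negMulLog (f b) - Real.negMulLog (∑ b ∈ s, f b)
      = ∑ b ∈ s, f b * Real.log ((∑ b' ∈ s, f b') / f b) := by
  have h1 : Real.negMulLog (∑ b ∈ s, f b) = ∑ b ∈ s, -(f b * Real.log (∑ b' ∈ s, f b')) := by
    simp [Real.negMulLog, Finset.sum_mul]
  rw [h1, ← Finset.sum_sub_distrib]
  refine Finset.sum_congr rfl fun b hb => ?_
  rw [sub_neg_eq_add]
  exact term_eq' _ _ (hf b hb) (Finset.single_le_sum hf hb)

/-- Key entropy inequality in the converse proof of Theorem 1 (capacity region of the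
broadcast channel with two deterministic channel state components): for `λ ≤ 1` with
`p̄₁ ≤ λ p̄₂`, the weighted combination `(λp̄₂ − p̄₁)H(F₂|U) + (λp₂ − p₁)H(F₁|U)` is at most
`(λp̄₂ − p̄₁)H(F₂|F₁)`, where `F₁, F₂` are the `A`- and `B`-coordinates of a joint pmf `r`
on `U × A × B`. -/
theorem aux_entropy_inequality {U A B : Type*} [Fintype U] [Fintype A] [Fintype B]
    [Nonempty U] [Nonempty A] [Nonempty B]
    (r : U × A × B → ℝ) (hr : IsPMF r)
    (p₁ p₂ : ℝ) (hp₁0 : 0 ≤ p₁) (hp₁1 : p₁ ≤ 1) (hp₂0 : 0 ≤ p₂) (hp₂1 : p₂ ≤ 1)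
    (lam : ℝ) (hlam1 : lam ≤ 1) (hlam2 : 1 - p₁ ≤ lam * (1 - p₂)) :
    (lam * (1 - p₂) - (1 - p₁)) *
        (entropy (fun ub : U × B => ∑ a, r (ub.1, a, ub.2)) -
          entropy (fun u : U => ∑ a, ∑ b, r (u, a, b))) +
      (lam * p₂ - p₁) *
        (entropy (fun ua : U × A => ∑ b, r (ua.1, ua.2, b)) -
          entropy (fun u : U => ∑ a, ∑ b, r (u, a, b))) ≤
    (lam * (1 - p₂) - (1 - p₁)) *
        (entropy (fun ab : A × B => ∑ u, r (u, ab.1, ab.2)) -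
          entropy (fun a : A => ∑ u, ∑ b, r (u, a, b))) := by
  obtain ⟨hr0, -⟩ := hr
  -- H(U) ≤ H(U,A)
  have hf1 : entropy (fun u : U => ∑ a, ∑ b, r (u, a, b)) ≤
      entropy (fun ua : U × A => ∑ b, r (ua.1, ua.2, b)) := by
    simp only [entropy, Fintype.sum_prod_type]
    refine Finset.sum_le_sum fun u _ => ?_
    exact negMulLog_sum_le _ _ (fun a _ => Finset.sum_nonneg fun b _ => hr0 _)
  -- H(U,B) ≤ H(U,A,B)
  have hf2 : entropy (fun ub : U × B => ∑ a, r (ub.1, a, ub.2)) ≤ entropy r := by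
    simp only [entropy, Fintype.sum_prod_type]
    refine Finset.sum_le_sum fun u _ => ?_
    rw [Finset.sum_comm]
    exact Finset.sum_le_sum fun b _ => negMulLog_sum_le _ _ (fun a _ => hr0 _)
  -- H(U,A,B) - H(U,A) ≤ H(A,B) - H(A)
  have e1a : entropy r - entropy (fun ua : U × A => ∑ b, r (ua.1, ua.2, b))
      = ∑ u, ∑ a, ∑ b, r (u, a, b) *
          Real.log ((∑ b', r (u, a, b')) / r (u, a, b)) := by
    simp only [entropy, Fintype.sum_prod_type, ← Finset.sum_sub_distrib]
    refine Finset.sum_congr rfl fun u _ => Finset.sum_congr rfl fun a _ => ?_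
    exact sum_negMulLog_sub _ _ (fun b _ => hr0 _)
  have e1 : entropy r - entropy (fun ua : U × A => ∑ b, r (ua.1, ua.2, b))
      = ∑ a, ∑ b, ∑ u, r (u, a, b) *
          Real.log ((∑ b', r (u, a, b')) / r (u, a, b)) := by
    rw [e1a]
    rw [Finset.sum_comm]
    exact Finset.sum_congr rfl fun a _ => Finset.sum_comm
  have e2 : entropy (fun ab : A × B => ∑ u, r (u, ab.1, ab.2)) -
        entropy (fun a : A => ∑ u, ∑ b, r (u, a, b))
      = ∑ a, ∑ b, (∑ u, r (u, a, b)) *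
          Real.log ((∑ u, ∑ b', r (u, a, b')) / (∑ u, r (u, a, b))) := by
    simp only [entropy, Fintype.sum_prod_type, ← Finset.sum_sub_distrib]
    refine Finset.sum_congr rfl fun a _ => ?_
    have hc : (∑ u, ∑ b, r (u, a, b)) = ∑ b, ∑ u, r (u, a, b) := Finset.sum_comm
    rw [hc, sum_negMulLog_sub _ _ (fun b _ => Finset.sum_nonneg fun u _ => hr0 _)]
  have hf3 : entropy r - entropy (fun ua : U × A => ∑ b, r (ua.1, ua.2, b)) ≤
      entropy (fun ab : A × B => ∑ u, r (u, ab.1, ab.2)) -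
        entropy (fun a : A => ∑ u, ∑ b, r (u, a, b)) := by
    rw [e1, e2]
    refine Finset.sum_le_sum fun a _ => Finset.sum_le_sum fun b _ => ?_
    exact log_sum_ineq Finset.univ (fun u => r (u, a, b)) (fun u => ∑ b', r (u, a, b'))
      (fun u _ => hr0 _)
      (fun u _ => Finset.single_le_sum (f := fun b' => r (u, a, b'))
        (fun b' _ => hr0 _) (Finset.mem_univ b))
  set HU := entropy (fun u : U => ∑ a, ∑ b, r (u, a, b)) with hHU
  set HUA := entropy (fun ua : U × A => ∑ b, r (ua.1, ua.2, b)) with hHUA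
  set HUB := entropy (fun ub : U × B => ∑ a, r (ub.1, a, ub.2)) with hHUB
  set HAB := entropy (fun ab : A × B => ∑ u, r (u, ab.1, ab.2)) with hHAB
  set HA := entropy (fun a : A => ∑ u, ∑ b, r (u, a, b)) with hHA
  have hc₁ : 0 ≤ lam * (1 - p₂) - (1 - p₁) := by linarith
  have t1 : (lam * (1 - p₂) - (1 - p₁)) * (HUB - HUA) ≤
      (lam * (1 - p₂) - (1 - p₁)) * (HAB - HA) :=
    mul_le_mul_of_nonneg_left (by linarith) hc₁
  have t2 : (lam - 1) * (HUA - HU) ≤ 0 :=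
    mul_nonpos_of_nonpos_of_nonneg (by linarith) (by linarith)
  calc (lam * (1 - p₂) - (1 - p₁)) * (HUB - HU) + (lam * p₂ - p₁) * (HUA - HU)
      = (lam * (1 - p₂) - (1 - p₁)) * (HUB - HUA) + (lam - 1) * (HUA - HU) := by ring
    _ ≤ (lam * (1 - p₂) - (1 - p₁)) * (HAB - HA) + 0 := add_le_add t1 t2
    _ = (lam * (1 - p₂) - (1 - p₁)) * (HAB - HA) := by ring
end
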